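/- Let T be an interval exchange transformation that is ergodic with respect to Lebesgue measure λ, and let {a_i}_{i≥1} be a non-increasing sequence of positive reals. (i) If some x ∈ [0,1) satisfies λ(⋂_{n≥1} ⋃_{i≥n} B(T^i x, a_i)) > 0, then λ(⋂_{n≥1} ⋃_{i≥n} B(T^i x, a_i)) = 1. (ii) If the set of x with λ(⋂_{n≥1} ⋃_{i≥n} B(T^i x, a_i)) = 1 has positive λ-measure, then λ(⋂_{n≥1} ⋃_{i≥n} B(T^i x, a_i)) = 1 for λ-almost every x. -/

import Mathlib

open MeasureTheory Filter

noncomputable section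

/-- Lebesgue measure on `[0,1)`. -/
def lam : Measure ℝ := volume.restrict (Set.Ico 0 1)

/-- `⋂_{n} ⋃_{i ≥ n} A i`: the set of points lying in `A i` for infinitely many `i`. -/
def limsupSet {α : Type*} (A : ℕ → Set α) : Set α :=
  ⋂ n, ⋃ i, ⋃ _ : n ≤ i, A i

/-- A sequence of positive reals which is non-increasing with divergent sum. -/
def standardSeq (a : ℕ → ℝ) : Prop :=
  (∀ i, 0 < a i) ∧ (∀ m n, m ≤ n → a n ≤ a m) ∧ ¬ Summable a

/-- The left endpoint of the `j`-th interval determined by the length vector `L`. -/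
def pieceLeft {d : ℕ} (L : Fin d → ℝ) (j : Fin d) : ℝ :=
  ∑ k ∈ Finset.univ.filter (fun k => k < j), L k

/-- `x` belongs to the `j`-th interval `I_j = [∑_{k<j} l_k, ∑_{k≤j} l_k)`. -/
def inPiece {d : ℕ} (L : Fin d → ℝ) (j : Fin d) (x : ℝ) : Prop :=
  pieceLeft L j ≤ x ∧ x < pieceLeft L j + L j

open scoped Classical in
/-- The interval exchange transformation `S_{L,π}` (extended by the identity off `[0,1)`). -/
def iet {d : ℕ} (L : Fin d → ℝ) (π : Equiv.Perm (Fin d)) (x : ℝ) : ℝ :=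
  if h : ∃ j, inPiece L j x then
    x - pieceLeft L h.choose + ∑ k ∈ Finset.univ.filter (fun k => π k < π h.choose), L k
  else x

/-- Irreducibility of a permutation: no proper initial segment is invariant. -/
def IrredPerm {d : ℕ} (π : Equiv.Perm (Fin d)) : Prop :=
  ∀ k : Fin d, (k : ℕ) + 1 < d → Finset.image π (Finset.Iic k) ≠ Finset.Iic k

/-- The simplex of length vectors. -/
def simplexSet (d : ℕ) : Set (Fin d → ℝ) :=
  {L | (∀ i, 0 < L i) ∧ ∑ i, L i = 1}

/-- Normalization of a positive length vector to the simplex. -/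
def normLen {d : ℕ} (L : Fin d → ℝ) : Fin d → ℝ := fun i => L i / ∑ j, L j


/-- `T` is ergodic with respect to Lebesgue measure on `[0,1)`: every `T`-invariant
measurable subset of `[0,1)` has measure `0` or `1`. -/
def ergodicOn01 (T : ℝ → ℝ) : Prop :=
  ∀ A : Set ℝ, A ⊆ Set.Ico 0 1 → MeasurableSet A → T ⁻¹' A = A → lam A = 0 ∨ lam A = 1

namespace IETAux

open Set Finset

variable {d : ℕ}

theorem simplex_dpos {L : Fin d → ℝ} (hL : L ∈ simplexSet d) : 0 < d := by
  rcases Nat.eq_zero_or_pos d with h | h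
  · exfalso
    have h2 : ∑ i, L i = 1 := hL.2
    subst h
    simp at h2
  · exact h

theorem pieceLeft_nonneg {L : Fin d → ℝ} (hL : L ∈ simplexSet d) (j : Fin d) :
    0 ≤ pieceLeft L j :=
  Finset.sum_nonneg fun k _ => (hL.1 k).le

theorem sum_Iic_eq {L : Fin d → ℝ} (j : Fin d) :
    pieceLeft L j + L j = ∑ k ∈ Finset.univ.filter (fun k => k ≤ j), L k := by
  have h : Finset.univ.filter (fun k => k ≤ j) =
      insert j (Finset.univ.filter (fun k : Fin d => k < j)) := by
    ext k
    simp only [Finset.mem_filter, Finset.mem_univ, true_and, Finset.mem_insert]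
    constructor
    · intro hk
      rcases eq_or_lt_of_le hk with h' | h'
      · exact Or.inl h'
      · exact Or.inr h'
    · rintro (rfl | h')
      · exact le_refl _
      · exact h'.le
  rw [h, Finset.sum_insert (by simp)]
  show pieceLeft L j + L j = L j + pieceLeft L j
  ring

theorem pieceLeft_succ_le {L : Fin d → ℝ} (hL : L ∈ simplexSet d) {j j' : Fin d}
    (h : j < j') : pieceLeft L j + L j ≤ pieceLeft L j' := by
  rw [sum_Iic_eq]
  apply Finset.sum_le_sum_of_subset_of_nonneg
  · intro k hk
    simp only [Finset.mem_filter, Finset.mem_univ, true_and] at hk ⊢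
    exact lt_of_le_of_lt hk h
  · intro k _ _
    exact (hL.1 k).le

theorem pieceLeft_add_le_one {L : Fin d → ℝ} (hL : L ∈ simplexSet d) (j : Fin d) :
    pieceLeft L j + L j ≤ 1 := by
  rw [sum_Iic_eq, ← hL.2]
  apply Finset.sum_le_sum_of_subset_of_nonneg
  · exact Finset.filter_subset _ _
  · intro k _ _
    exact (hL.1 k).le

theorem inPiece_mem {L : Fin d → ℝ} (hL : L ∈ simplexSet d) {j : Fin d} {x : ℝ}
    (h : inPiece L j x) : x ∈ Set.Ico (0 : ℝ) 1 :=
  ⟨le_trans (pieceLeft_nonneg hL j) h.1, lt_of_lt_of_le h.2 (pieceLeft_add_le_one hL j)⟩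

theorem exists_inPiece {L : Fin d → ℝ} (hL : L ∈ simplexSet d) {x : ℝ}
    (hx : x ∈ Set.Ico (0 : ℝ) 1) : ∃ j, inPiece L j x := by
  have hd : 0 < d := simplex_dpos hL
  set F := Finset.univ.filter (fun j : Fin d => pieceLeft L j ≤ x) with hF
  have hne : F.Nonempty := by
    refine ⟨⟨0, hd⟩, ?_⟩
    simp only [hF, Finset.mem_filter, Finset.mem_univ, true_and]
    have : pieceLeft L ⟨0, hd⟩ = 0 := by
      unfold pieceLeft
      apply Finset.sum_eq_zero
      intro k hk
      simp only [Finset.mem_filter, Finset.mem_univ, true_and] at hk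
      exact absurd hk (by simp [Fin.lt_def])
    rw [this]; exact hx.1
  set j := F.max' hne with hj
  have hjF : j ∈ F := F.max'_mem hne
  have hple : pieceLeft L j ≤ x := by
    simpa [hF] using hjF
  refine ⟨j, hple, ?_⟩
  by_contra hge
  push_neg at hge
  -- x ≥ pieceLeft j + L j = ∑_{k ≤ j}
  have hsum : ∑ k ∈ Finset.univ.filter (fun k => k ≤ j), L k ≤ x := by
    rw [← sum_Iic_eq]; exact hge
  have hnotall : ¬ (∀ k : Fin d, k ≤ j) := by
    intro hall
    have : Finset.univ.filter (fun k : Fin d => k ≤ j) = Finset.univ := by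
      apply Finset.filter_true_of_mem
      intro k _; exact hall k
    rw [this] at hsum
    have := hL.2
    rw [this] at hsum
    exact absurd hx.2 (not_lt.mpr hsum)
  push_neg at hnotall
  obtain ⟨k0, hk0⟩ := hnotall
  have hjk : (j : ℕ) < (k0 : ℕ) := Fin.lt_def.mp hk0
  have hsd : (j : ℕ) + 1 < d := lt_of_le_of_lt hjk k0.2
  have hmem : (⟨(j : ℕ) + 1, hsd⟩ : Fin d) ∈ F := by
    simp only [hF, Finset.mem_filter, Finset.mem_univ, true_and]
    have heq : pieceLeft L (⟨(j : ℕ) + 1, hsd⟩ : Fin d) =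
        ∑ k ∈ Finset.univ.filter (fun k => k ≤ j), L k := by
      unfold pieceLeft
      apply Finset.sum_congr _ (fun _ _ => rfl)
      ext k
      simp only [Finset.mem_filter, Finset.mem_univ, true_and, Fin.lt_def, Fin.le_def]
      omega
    rw [heq]; exact hsum
  have hle : (⟨(j : ℕ) + 1, hsd⟩ : Fin d) ≤ j := F.le_max' _ hmem
  have h2 : (j : ℕ) + 1 ≤ (j : ℕ) := by simpa using Fin.le_def.mp hle
  omega

theorem inPiece_unique {L : Fin d → ℝ} (hL : L ∈ simplexSet d) {j j' : Fin d} {x : ℝ}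
    (h : inPiece L j x) (h' : inPiece L j' x) : j = j' := by
  by_contra hne
  rcases lt_or_gt_of_ne hne with hlt | hlt
  · have := pieceLeft_succ_le hL hlt
    linarith [h.2, h'.1]
  · have := pieceLeft_succ_le hL hlt
    linarith [h'.2, h.1]

theorem iet_apply {L : Fin d → ℝ} (hL : L ∈ simplexSet d) (π : Equiv.Perm (Fin d))
    {j : Fin d} {x : ℝ} (h : inPiece L j x) :
    iet L π x = x - pieceLeft L j + ∑ k ∈ Finset.univ.filter (fun k => π k < π j), L k := by
  have hex : ∃ j, inPiece L j x := ⟨j, h⟩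
  unfold iet
  rw [dif_pos hex]
  have hc : hex.choose = j := inPiece_unique hL hex.choose_spec h
  rw [hc]

theorem iet_id {L : Fin d → ℝ} (hL : L ∈ simplexSet d) (π : Equiv.Perm (Fin d))
    {x : ℝ} (hx : x ∉ Set.Ico (0 : ℝ) 1) : iet L π x = x := by
  unfold iet
  rw [dif_neg]
  rintro ⟨j, hj⟩
  exact hx (inPiece_mem hL hj)

theorem simplex_perm {L : Fin d → ℝ} (hL : L ∈ simplexSet d) (σ : Equiv.Perm (Fin d)) :
    (fun k => L (σ k)) ∈ simplexSet d := by
  refine ⟨fun i => hL.1 _, ?_⟩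
  rw [Equiv.sum_comp σ L]
  exact hL.2

theorem imgLeft_eq (L : Fin d → ℝ) (π : Equiv.Perm (Fin d)) (j : Fin d) :
    pieceLeft (fun k => L (π.symm k)) (π j) =
      ∑ k ∈ Finset.univ.filter (fun k => π k < π j), L k := by
  unfold pieceLeft
  rw [Finset.sum_filter, Finset.sum_filter]
  rw [← Equiv.sum_comp π (fun k' => if k' < π j then L (π.symm k') else 0)]
  simp

theorem iet_inPiece {L : Fin d → ℝ} (hL : L ∈ simplexSet d) (π : Equiv.Perm (Fin d))
    {j : Fin d} {x : ℝ} (h : inPiece L j x) :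
    inPiece (fun k => L (π.symm k)) (π j) (iet L π x) := by
  rw [iet_apply hL π h]
  have e := imgLeft_eq L π j
  constructor
  · rw [e]
    linarith [h.1]
  · have e2 : (fun k => L (π.symm k)) (π j) = L j := by simp
    rw [e, e2]
    linarith [h.2]

theorem iet_mem {L : Fin d → ℝ} (hL : L ∈ simplexSet d) (π : Equiv.Perm (Fin d))
    {x : ℝ} (hx : x ∈ Set.Ico (0 : ℝ) 1) : iet L π x ∈ Set.Ico (0 : ℝ) 1 := by
  obtain ⟨j, hj⟩ := exists_inPiece hL hx
  exact inPiece_mem (simplex_perm hL π.symm) (iet_inPiece hL π hj)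

theorem pieceLeft_congr {L L' : Fin d → ℝ} (h : ∀ k, L k = L' k) (j : Fin d) :
    pieceLeft L j = pieceLeft L' j :=
  Finset.sum_congr rfl fun k _ => h k

theorem iet_inv_comp {L : Fin d → ℝ} (hL : L ∈ simplexSet d) (π : Equiv.Perm (Fin d))
    (x : ℝ) : iet (fun k => L (π.symm k)) π.symm (iet L π x) = x := by
  by_cases hx : x ∈ Set.Ico (0 : ℝ) 1
  · obtain ⟨j, hj⟩ := exists_inPiece hL hx
    have h1 := iet_inPiece hL π hj
    rw [iet_apply (simplex_perm hL π.symm) π.symm h1]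
    rw [iet_apply hL π hj]
    have e1 : pieceLeft (fun k => L (π.symm k)) (π j) =
        ∑ k ∈ Finset.univ.filter (fun k => π k < π j), L k := imgLeft_eq L π j
    have e2 : ∑ k ∈ Finset.univ.filter
        (fun k => π.symm k < π.symm (π j)), (fun k => L (π.symm k)) k = pieceLeft L j := by
      have hfe : (Finset.univ.filter (fun k => π.symm k < π.symm (π j))) =
          Finset.univ.filter (fun k => π.symm k < j) := by
        ext k
        simp [Equiv.symm_apply_apply]
      rw [hfe]
      unfold pieceLeft
      rw [Finset.sum_filter, Finset.sum_filter,
        ← Equiv.sum_comp π (fun k => if (π.symm k) < j then L (π.symm k) else 0)]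
      simp [Equiv.symm_apply_apply]
    rw [e2, e1]
    ring
  · rw [iet_id hL π hx, iet_id (simplex_perm hL π.symm) π.symm hx]

theorem iet_comp_inv {L : Fin d → ℝ} (hL : L ∈ simplexSet d) (π : Equiv.Perm (Fin d))
    (y : ℝ) : iet L π (iet (fun k => L (π.symm k)) π.symm y) = y := by
  have h := iet_inv_comp (simplex_perm hL π.symm) π.symm y
  simp only [Equiv.symm_symm, Equiv.symm_apply_apply] at h
  exact h

theorem iet_preimage {L : Fin d → ℝ} (hL : L ∈ simplexSet d) (π : Equiv.Perm (Fin d))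
    (s : Set ℝ) :
    iet L π ⁻¹' s = (s ∩ (Set.Ico (0:ℝ) 1)ᶜ) ∪
      ⋃ j, (Set.Ico (pieceLeft L j) (pieceLeft L j + L j) ∩
        (fun x => x - pieceLeft L j +
          ∑ k ∈ Finset.univ.filter (fun k => π k < π j), L k) ⁻¹' s) := by
  ext x
  simp only [Set.mem_preimage, Set.mem_union, Set.mem_inter_iff, Set.mem_compl_iff,
    Set.mem_iUnion, Set.mem_Ico]
  by_cases hx : x ∈ Set.Ico (0 : ℝ) 1
  · obtain ⟨j, hj⟩ := exists_inPiece hL hx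
    rw [iet_apply hL π hj]
    constructor
    · intro h
      exact Or.inr ⟨j, ⟨hj.1, hj.2⟩, h⟩
    · rintro (⟨hs, hns⟩ | ⟨j', ⟨hj'1, hj'2⟩, hj's⟩)
      · exact absurd hx hns
      · have : inPiece L j' x := ⟨hj'1, hj'2⟩
        have hjj : j = j' := inPiece_unique hL hj this
        subst hjj
        exact hj's
  · rw [iet_id hL π hx]
    constructor
    · intro h
      exact Or.inl ⟨h, hx⟩
    · rintro (⟨hs, _⟩ | ⟨j', ⟨hj'1, hj'2⟩, _⟩)
      · exact hs
      · exact absurd (inPiece_mem hL ⟨hj'1, hj'2⟩) hx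

theorem measurable_iet {L : Fin d → ℝ} (hL : L ∈ simplexSet d) (π : Equiv.Perm (Fin d)) :
    Measurable (iet L π) := by
  intro s hs
  rw [iet_preimage hL π s]
  apply MeasurableSet.union
  · exact hs.inter measurableSet_Ico.compl
  · exact MeasurableSet.iUnion fun j =>
      measurableSet_Ico.inter (((measurable_id.sub_const _).add_const _) hs)

theorem iUnion_pieces {L : Fin d → ℝ} (hL : L ∈ simplexSet d) :
    (⋃ j, Set.Ico (pieceLeft L j) (pieceLeft L j + L j)) = Set.Ico (0:ℝ) 1 := by
  ext x
  simp only [Set.mem_iUnion, Set.mem_Ico]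
  constructor
  · rintro ⟨j, hj⟩
    exact inPiece_mem hL ⟨hj.1, hj.2⟩
  · intro hx
    obtain ⟨j, hj⟩ := exists_inPiece hL hx
    exact ⟨j, hj.1, hj.2⟩

theorem pieces_disjoint {L : Fin d → ℝ} (hL : L ∈ simplexSet d) :
    Pairwise (Function.onFun Disjoint fun j : Fin d =>
      Set.Ico (pieceLeft L j) (pieceLeft L j + L j)) := by
  intro j j' hne
  rw [Function.onFun, Set.disjoint_left]
  intro x hx hx'
  rw [Set.mem_Ico] at hx hx'
  exact hne (inPiece_unique hL ⟨hx.1, hx.2⟩ ⟨hx'.1, hx'.2⟩)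

theorem iet_preserving {L : Fin d → ℝ} (hL : L ∈ simplexSet d) (π : Equiv.Perm (Fin d))
    {A : Set ℝ} (hA : MeasurableSet A) : lam (iet L π ⁻¹' A) = lam A := by
  have hTm : Measurable (iet L π) := measurable_iet hL π
  have hL2 : (fun k => L (π.symm k)) ∈ simplexSet d := simplex_perm hL π.symm
  have hmain : (iet L π ⁻¹' A) ∩ Set.Ico (0:ℝ) 1 =
      ⋃ j, (Set.Ico (pieceLeft L j) (pieceLeft L j + L j) ∩
        (fun x => x - pieceLeft L j +
          ∑ k ∈ Finset.univ.filter (fun k => π k < π j), L k) ⁻¹' A) := by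
    rw [iet_preimage hL π A, Set.union_inter_distrib_right]
    have h1 : (A ∩ (Set.Ico (0:ℝ) 1)ᶜ) ∩ Set.Ico (0:ℝ) 1 = ∅ := by
      rw [Set.inter_assoc, Set.compl_inter_self, Set.inter_empty]
    rw [h1, Set.empty_union, Set.iUnion_inter]
    apply Set.iUnion_congr
    intro j
    rw [Set.inter_eq_left.mpr]
    intro y hy
    exact inPiece_mem hL ⟨(Set.mem_Ico.mp hy.1).1, (Set.mem_Ico.mp hy.1).2⟩
  rw [lam, Measure.restrict_apply (hTm hA), Measure.restrict_apply hA, hmain]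
  have hdisj : Pairwise (Function.onFun Disjoint fun j : Fin d =>
      Set.Ico (pieceLeft L j) (pieceLeft L j + L j) ∩
        (fun x => x - pieceLeft L j +
          ∑ k ∈ Finset.univ.filter (fun k => π k < π j), L k) ⁻¹' A) := by
    intro j j' hne
    exact Disjoint.mono Set.inter_subset_left Set.inter_subset_left (pieces_disjoint hL hne)
  have hms : ∀ j : Fin d, MeasurableSet
      (Set.Ico (pieceLeft L j) (pieceLeft L j + L j) ∩
        (fun x => x - pieceLeft L j +
          ∑ k ∈ Finset.univ.filter (fun k => π k < π j), L k) ⁻¹' A) := fun j =>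
    measurableSet_Ico.inter (((measurable_id.sub_const _).add_const _) hA)
  rw [measure_iUnion hdisj hms, tsum_fintype]
  have hterm : ∀ j : Fin d,
      volume (Set.Ico (pieceLeft L j) (pieceLeft L j + L j) ∩
        (fun x => x - pieceLeft L j +
          ∑ k ∈ Finset.univ.filter (fun k => π k < π j), L k) ⁻¹' A) =
      volume (Set.Ico (pieceLeft (fun k => L (π.symm k)) (π j))
          (pieceLeft (fun k => L (π.symm k)) (π j) + (fun k => L (π.symm k)) (π j)) ∩ A) := by
    intro j
    set c := ∑ k ∈ Finset.univ.filter (fun k => π k < π j), L k with hc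
    have hset : Set.Ico (pieceLeft L j) (pieceLeft L j + L j) ∩
        (fun x => x - pieceLeft L j + c) ⁻¹' A =
        (fun x => x + (c - pieceLeft L j)) ⁻¹' (Set.Ico c (c + L j) ∩ A) := by
      ext z
      simp only [Set.mem_inter_iff, Set.mem_Ico, Set.mem_preimage]
      constructor
      · rintro ⟨⟨h1, h2⟩, h3⟩
        refine ⟨⟨by linarith, by linarith⟩, ?_⟩
        have : z + (c - pieceLeft L j) = z - pieceLeft L j + c := by ring
        rw [this]; exact h3
      · rintro ⟨⟨h1, h2⟩, h3⟩
        refine ⟨⟨by linarith, by linarith⟩, ?_⟩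
        have : z - pieceLeft L j + c = z + (c - pieceLeft L j) := by ring
        rw [this]; exact h3
    rw [hset, measure_preimage_add_right]
    have hc2 : c = pieceLeft (fun k => L (π.symm k)) (π j) := (imgLeft_eq L π j).symm
    have hL2j : L j = (fun k => L (π.symm k)) (π j) := by simp
    rw [hc2, hL2j]
  rw [Finset.sum_congr rfl (fun j _ => hterm j)]
  have hdisj2 : Pairwise (Function.onFun Disjoint fun j' : Fin d =>
      Set.Ico (pieceLeft (fun k => L (π.symm k)) j')
        (pieceLeft (fun k => L (π.symm k)) j' + (fun k => L (π.symm k)) j') ∩ A) := by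
    intro j j' hne
    exact Disjoint.mono Set.inter_subset_left Set.inter_subset_left (pieces_disjoint hL2 hne)
  have hms2 : ∀ j' : Fin d, MeasurableSet
      (Set.Ico (pieceLeft (fun k => L (π.symm k)) j')
        (pieceLeft (fun k => L (π.symm k)) j' + (fun k => L (π.symm k)) j') ∩ A) :=
    fun j' => measurableSet_Ico.inter hA
  have hstep : ∑ j : Fin d, volume
      (Set.Ico (pieceLeft (fun k => L (π.symm k)) (π j))
        (pieceLeft (fun k => L (π.symm k)) (π j) + (fun k => L (π.symm k)) (π j)) ∩ A) =
      ∑ j' : Fin d, volume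
      (Set.Ico (pieceLeft (fun k => L (π.symm k)) j')
        (pieceLeft (fun k => L (π.symm k)) j' + (fun k => L (π.symm k)) j') ∩ A) :=
    Equiv.sum_comp π (fun j' => volume
      (Set.Ico (pieceLeft (fun k => L (π.symm k)) j')
        (pieceLeft (fun k => L (π.symm k)) j' + (fun k => L (π.symm k)) j') ∩ A))
  rw [hstep, ← tsum_fintype (L := .unconditional _), ← measure_iUnion hdisj2 hms2, ← Set.iUnion_inter,
    iUnion_pieces hL2, Set.inter_comm]

theorem lam_univ : lam Set.univ = 1 := by
  rw [lam, Measure.restrict_apply MeasurableSet.univ, Set.univ_inter, Real.volume_Ico]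
  norm_num

theorem lam_finite : IsFiniteMeasure lam :=
  ⟨by rw [lam_univ]; exact ENNReal.one_lt_top⟩

theorem lam_ne_top (s : Set ℝ) : lam s ≠ ⊤ := by
  have := lam_finite
  exact measure_ne_top lam s

theorem mem_limsupSet {α : Type*} {A : ℕ → Set α} {y : α} :
    y ∈ limsupSet A ↔ ∀ n, ∃ i, n ≤ i ∧ y ∈ A i := by
  unfold limsupSet
  simp only [Set.mem_iInter, Set.mem_iUnion, exists_prop]

theorem iterate_id {T : ℝ → ℝ} (hTid : ∀ x, x ∉ Set.Ico (0:ℝ) 1 → T x = x)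
    {x : ℝ} (hx : x ∉ Set.Ico (0:ℝ) 1) (n : ℕ) : T^[n] x = x := by
  induction n with
  | zero => rfl
  | succ n ih => rw [Function.iterate_succ_apply', ih, hTid x hx]

/-- The 0-1 law via the exactly invariant hull of an almost invariant set. -/
theorem hull {T : ℝ → ℝ} (hTm : Measurable T)
    (hTp : ∀ {A : Set ℝ}, MeasurableSet A → lam (T ⁻¹' A) = lam A)
    (hTid : ∀ x, x ∉ Set.Ico (0:ℝ) 1 → T x = x)
    (hErg : ergodicOn01 T)
    {B : Set ℝ} (hBm : MeasurableSet B) (hBs : B ⊆ Set.Ico (0:ℝ) 1)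
    (h1 : lam (B \ T ⁻¹' B) = 0) (h2 : lam (T ⁻¹' B \ B) = 0) :
    lam B = 0 ∨ lam B = 1 := by
  have hitm : ∀ n : ℕ, Measurable (T^[n]) := fun n => hTm.iterate n
  have hpre : ∀ n : ℕ, MeasurableSet ((T^[n]) ⁻¹' B) := fun n => hitm n hBm
  have hitp : ∀ n : ℕ, ∀ {C : Set ℝ}, MeasurableSet C → lam ((T^[n]) ⁻¹' C) = lam C := by
    intro n
    induction n with
    | zero => intro C _; simp
    | succ n ih =>
      intro C hC
      rw [Function.iterate_succ, Set.preimage_comp, hTp (hitm n hC), ih hC]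
  have hdiff : ∀ n : ℕ, lam ((T^[n]) ⁻¹' B \ B) = 0 ∧ lam (B \ (T^[n]) ⁻¹' B) = 0 := by
    intro n
    induction n with
    | zero => simp
    | succ n ih =>
      have e : (T^[n+1]) ⁻¹' B = (T^[n]) ⁻¹' (T ⁻¹' B) := by
        rw [Function.iterate_succ', Set.preimage_comp]
      constructor
      · have hsub : (T^[n+1]) ⁻¹' B \ B ⊆
            ((T^[n]) ⁻¹' (T ⁻¹' B) \ (T^[n]) ⁻¹' B) ∪ ((T^[n]) ⁻¹' B \ B) := by
          rw [e]
          intro z hz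
          by_cases h : z ∈ (T^[n]) ⁻¹' B
          · exact Or.inr ⟨h, hz.2⟩
          · exact Or.inl ⟨hz.1, h⟩
        refine le_antisymm (le_trans (measure_mono hsub) ?_) (zero_le)
        rw [← Set.preimage_diff]
        refine le_trans (measure_union_le _ _) ?_
        rw [hitp n ((hTm hBm).diff hBm), h2, ih.1, add_zero]
      · have hsub : B \ (T^[n+1]) ⁻¹' B ⊆
            (B \ (T^[n]) ⁻¹' B) ∪ ((T^[n]) ⁻¹' B \ (T^[n]) ⁻¹' (T ⁻¹' B)) := by
          rw [e]
          intro z hz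
          by_cases h : z ∈ (T^[n]) ⁻¹' B
          · exact Or.inr ⟨h, hz.2⟩
          · exact Or.inl ⟨hz.1, h⟩
        refine le_antisymm (le_trans (measure_mono hsub) ?_) (zero_le)
        rw [← Set.preimage_diff]
        refine le_trans (measure_union_le _ _) ?_
        rw [hitp n (hBm.diff (hTm hBm)), h1, ih.2, add_zero]
  set A := limsupSet (fun n => (T^[n]) ⁻¹' B) with hA
  have hAm : MeasurableSet A :=
    MeasurableSet.iInter fun N => MeasurableSet.iUnion fun n =>
      MeasurableSet.iUnion fun _ => hpre n
  have hAsub : A ⊆ Set.Ico (0:ℝ) 1 := by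
    intro x hxA
    by_contra hx
    rw [hA, mem_limsupSet] at hxA
    obtain ⟨i, _, hxi⟩ := hxA 0
    rw [Set.mem_preimage, iterate_id hTid hx i] at hxi
    exact hx (hBs hxi)
  have hAinv : T ⁻¹' A = A := by
    ext x
    rw [Set.mem_preimage, hA, mem_limsupSet, mem_limsupSet]
    constructor
    · intro h N
      obtain ⟨i, hi, hxi⟩ := h N
      refine ⟨i + 1, by omega, ?_⟩
      rw [Set.mem_preimage, Function.iterate_succ_apply]
      exact hxi
    · intro h N
      obtain ⟨i, hi, hxi⟩ := h (N + 1)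
      obtain ⟨m, rfl⟩ : ∃ m, i = m + 1 := ⟨i - 1, by omega⟩
      refine ⟨m, by omega, ?_⟩
      rw [Set.mem_preimage, ← Function.iterate_succ_apply]
      exact hxi
  have h01 := hErg A hAsub hAm hAinv
  have hAB : lam (A \ B) = 0 := by
    have hsub : A \ B ⊆ ⋃ n, ((T^[n]) ⁻¹' B \ B) := by
      rintro x ⟨hxA, hxB⟩
      rw [hA, mem_limsupSet] at hxA
      obtain ⟨i, _, hxi⟩ := hxA 0
      exact Set.mem_iUnion.mpr ⟨i, hxi, hxB⟩
    refine le_antisymm (le_trans (measure_mono hsub) ?_) (zero_le)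
    exact le_of_eq (measure_iUnion_null fun n => (hdiff n).1)
  have hBA : lam (B \ A) = 0 := by
    have hsub : B \ A ⊆ ⋃ n, (B \ (T^[n]) ⁻¹' B) := by
      rintro x ⟨hxB, hxA⟩
      rw [hA, mem_limsupSet] at hxA
      push_neg at hxA
      obtain ⟨N, hN⟩ := hxA
      exact Set.mem_iUnion.mpr ⟨N, hxB, hN N le_rfl⟩
    refine le_antisymm (le_trans (measure_mono hsub) ?_) (zero_le)
    exact le_of_eq (measure_iUnion_null fun n => (hdiff n).2)
  have heq : lam B = lam A := by
    apply le_antisymm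
    · calc lam B ≤ lam (A ∪ (B \ A)) := measure_mono (by
            intro x hx
            by_cases h : x ∈ A
            · exact Or.inl h
            · exact Or.inr ⟨hx, h⟩)
        _ ≤ lam A + lam (B \ A) := measure_union_le _ _
        _ = lam A := by rw [hBA, add_zero]
    · calc lam A ≤ lam (B ∪ (A \ B)) := measure_mono (by
            intro x hx
            by_cases h : x ∈ B
            · exact Or.inl h
            · exact Or.inr ⟨hx, h⟩)
        _ ≤ lam B + lam (A \ B) := measure_union_le _ _
        _ = lam B := by rw [hAB, add_zero]
  rw [heq]
  exact h01

theorem rigid_or_block {M : Fin d → ℝ} (hM : M ∈ simplexSet d) (σ : Equiv.Perm (Fin d))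
    {y z : ℝ} (hy : y ∈ Set.Ico (0:ℝ) 1) (hz : z ∈ Set.Ico (0:ℝ) 1) :
    iet M σ y - iet M σ z = y - z ∨ ∃ j, |y - pieceLeft M j| ≤ |y - z| := by
  obtain ⟨jy, hjy⟩ := exists_inPiece hM hy
  obtain ⟨jz, hjz⟩ := exists_inPiece hM hz
  by_cases hjj : jy = jz
  · left
    subst hjj
    rw [iet_apply hM σ hjy, iet_apply hM σ hjz]
    ring
  · right
    rcases lt_or_gt_of_ne hjj with h | h
    · refine ⟨jz, ?_⟩
      have h1 : y < pieceLeft M jz := lt_of_lt_of_le hjy.2 (pieceLeft_succ_le hM h)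
      have h2 : pieceLeft M jz ≤ z := hjz.1
      rw [abs_of_nonpos (by linarith), abs_of_nonpos (by linarith)]
      linarith
    · refine ⟨jy, ?_⟩
      have h1 : z < pieceLeft M jy := lt_of_lt_of_le hjz.2 (pieceLeft_succ_le hM h)
      have h2 : pieceLeft M jy ≤ y := hjy.1
      rw [abs_of_nonneg (by linarith), abs_of_nonneg (by linarith)]
      linarith


section Minimality

/-- The finite set of "milestones": piece left endpoints and `1`. -/
def P0 {d : ℕ} (L : Fin d → ℝ) : Finset ℝ :=
  insert 1 (Finset.univ.image (pieceLeft L))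

theorem pieceLeft_add_mem {L : Fin d → ℝ} (hL : L ∈ simplexSet d) (j : Fin d) :
    pieceLeft L j + L j ∈ P0 L := by
  by_cases h : (j : ℕ) + 1 < d
  · have heq : pieceLeft L (⟨(j : ℕ) + 1, h⟩ : Fin d) = pieceLeft L j + L j := by
      rw [sum_Iic_eq]
      unfold pieceLeft
      apply Finset.sum_congr _ (fun _ _ => rfl)
      ext k
      simp only [Finset.mem_filter, Finset.mem_univ, true_and, Fin.lt_def, Fin.le_def]
      omega
    rw [← heq]
    exact Finset.mem_insert_of_mem (Finset.mem_image_of_mem _ (Finset.mem_univ _))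
  · have hall : ∀ k : Fin d, k ≤ j := by
      intro k
      rw [Fin.le_def]
      have := k.2
      omega
    have : pieceLeft L j + L j = 1 := by
      rw [sum_Iic_eq]
      rw [Finset.filter_true_of_mem (fun k _ => hall k)]
      exact hL.2
    rw [this]
    exact Finset.mem_insert_self _ _

theorem P0_nonempty_above {L : Fin d → ℝ} {z : ℝ} (hz : z < 1) :
    ((P0 L).filter (fun p => z < p)).Nonempty :=
  ⟨1, Finset.mem_filter.mpr ⟨Finset.mem_insert_self _ _, hz⟩⟩

/-- distance from `z` to the next milestone strictly to the right. -/
noncomputable def nxtP {d : ℕ} (L : Fin d → ℝ) (z : ℝ) (hz : z < 1) : ℝ :=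
  ((P0 L).filter (fun p => z < p)).min' (P0_nonempty_above hz)

theorem nxtP_gt {L : Fin d → ℝ} {z : ℝ} (hz : z < 1) : z < nxtP L z hz := by
  have := ((P0 L).filter (fun p => z < p)).min'_mem (P0_nonempty_above hz)
  exact (Finset.mem_filter.mp this).2

theorem nxtP_le {L : Fin d → ℝ} {z p : ℝ} (hz : z < 1) (hp : p ∈ P0 L) (hzp : z < p) :
    nxtP L z hz ≤ p :=
  Finset.min'_le _ _ (Finset.mem_filter.mpr ⟨hp, hzp⟩)

theorem nxtP_mem {L : Fin d → ℝ} {z : ℝ} (hz : z < 1) : nxtP L z hz ∈ P0 L := by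
  have := ((P0 L).filter (fun p => z < p)).min'_mem (P0_nonempty_above hz)
  exact (Finset.mem_filter.mp this).1

/-- one-step right rigidity. -/
theorem step_rigid {L : Fin d → ℝ} (hL : L ∈ simplexSet d) (π : Equiv.Perm (Fin d))
    {z s : ℝ} (hz : z ∈ Set.Ico (0:ℝ) 1) (hs : 0 ≤ s) (hsn : z + s < nxtP L z hz.2) :
    iet L π (z + s) = iet L π z + s := by
  obtain ⟨j, hj⟩ := exists_inPiece hL hz
  have hend : pieceLeft L j + L j ∈ P0 L := pieceLeft_add_mem hL j
  have hlt : z < pieceLeft L j + L j := hj.2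
  have hnle : nxtP L z hz.2 ≤ pieceLeft L j + L j := nxtP_le hz.2 hend hlt
  have hj' : inPiece L j (z + s) := ⟨le_trans hj.1 (by linarith), by linarith⟩
  rw [iet_apply hL π hj, iet_apply hL π hj']
  ring

theorem iterate_mem_Ico {L : Fin d → ℝ} (hL : L ∈ simplexSet d) (π : Equiv.Perm (Fin d))
    {x : ℝ} (hx : x ∈ Set.Ico (0:ℝ) 1) (n : ℕ) : (iet L π)^[n] x ∈ Set.Ico (0:ℝ) 1 := by
  induction n with
  | zero => exact hx
  | succ n ih => rw [Function.iterate_succ_apply']; exact iet_mem hL π ih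

/-- iterated right rigidity on a small window. -/
theorem window_rigid {L : Fin d → ℝ} (hL : L ∈ simplexSet d) (π : Equiv.Perm (Fin d))
    {x : ℝ} (hx : x ∈ Set.Ico (0:ℝ) 1) (n : ℕ) :
    ∃ η > 0, ∀ s, 0 ≤ s → s < η → ∀ k ≤ n, (iet L π)^[k] (x + s) = (iet L π)^[k] x + s := by
  induction n with
  | zero =>
    exact ⟨1, one_pos, fun s _ _ k hk => by
      interval_cases k
      simp⟩
  | succ n ih =>
    obtain ⟨η, hη, hrig⟩ := ih
    have hmem : (iet L π)^[n] x ∈ Set.Ico (0:ℝ) 1 := iterate_mem_Ico hL π hx n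
    set w := (iet L π)^[n] x with hw
    refine ⟨min η (nxtP L w hmem.2 - w), lt_min hη (by linarith [nxtP_gt (L := L) hmem.2]), ?_⟩
    intro s hs0 hslt k hk
    rcases Nat.lt_or_ge k (n+1) with hk' | hk'
    · exact hrig s hs0 (lt_of_lt_of_le hslt (min_le_left _ _)) k (by omega)
    · have hkeq : k = n + 1 := le_antisymm hk hk'
      subst hkeq
      rw [Function.iterate_succ_apply', Function.iterate_succ_apply']
      rw [hrig s hs0 (lt_of_lt_of_le hslt (min_le_left _ _)) n (le_refl n)]
      exact step_rigid hL π hmem hs0 (by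
        have := lt_of_lt_of_le hslt (min_le_right _ _)
        linarith)

theorem lam_Ico_inside {u v : ℝ} (hu : 0 ≤ u) (hv : v ≤ 1) :
    lam (Set.Ico u v) = ENNReal.ofReal (v - u) := by
  rw [lam, Measure.restrict_apply measurableSet_Ico]
  have : Set.Ico u v ∩ Set.Ico (0:ℝ) 1 = Set.Ico u v := by
    rw [Set.inter_eq_left]
    intro t ht
    exact ⟨le_trans hu ht.1, lt_of_lt_of_le ht.2 hv⟩
  rw [this, Real.volume_Ico]

/-- no periodic points. -/
theorem no_periodic {L : Fin d → ℝ} (hL : L ∈ simplexSet d) (π : Equiv.Perm (Fin d))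
    (hErg : ergodicOn01 (iet L π)) {y : ℝ} (hy : y ∈ Set.Ico (0:ℝ) 1) {p : ℕ} (hp : 1 ≤ p)
    (hper : (iet L π)^[p] y = y) : False := by
  obtain ⟨η, hη, hrig⟩ := window_rigid hL π hy p
  set ε := min (min (η / 2) (1 / (2 * p))) ((1 - y) / 2) with hε
  have hεpos : 0 < ε := by
    apply lt_min (lt_min (by linarith) (by positivity))
    have := hy.2
    linarith
  have hεη : ε < η := lt_of_le_of_lt (le_trans (min_le_left _ _) (min_le_left _ _)) (by linarith)
  have hεp : ε ≤ 1 / (2 * p) := le_trans (min_le_left _ _) (min_le_right _ _)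
  set A := ⋃ k ∈ Finset.range p, Set.Ico ((iet L π)^[k] y) ((iet L π)^[k] y + ε) with hA
  have hAm : MeasurableSet A :=
    (Finset.range p).measurableSet_biUnion (fun k _ => measurableSet_Ico)
  have hAsub : A ⊆ Set.Ico (0:ℝ) 1 := by
    intro z hz
    rw [hA, Set.mem_iUnion] at hz
    obtain ⟨k, hk⟩ := hz
    rw [Set.mem_iUnion] at hk
    obtain ⟨hkp, hz⟩ := hk
    have hmem := iterate_mem_Ico hL π hy k
    constructor
    · exact le_trans hmem.1 hz.1
    · -- z < T^[k] y + ε ≤ 1 : use rigidity at full window? use: T^k y ∈ [0,1) and z = T^k y + s with s < ε < η: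
      have hs0 : 0 ≤ z - (iet L π)^[k] y := by linarith [hz.1]
      have hsε : z - (iet L π)^[k] y < ε := by linarith [hz.2]
      have := hrig (z - (iet L π)^[k] y) hs0 (lt_trans hsε hεη) k (by
        rw [Finset.mem_range] at hkp; omega)
      -- T^[k] (y + s) = T^[k] y + s = z ∈ [0,1)
      have hmem2 : (iet L π)^[k] (y + (z - (iet L π)^[k] y)) ∈ Set.Ico (0:ℝ) 1 := by
        apply iterate_mem_Ico hL π
        constructor
        · linarith [hy.1]
        · have hyε : y + ε ≤ 1 := by
            have : ε ≤ (1 - y) / 2 := min_le_right _ _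
            linarith
          linarith [hsε]
      rw [this] at hmem2
      have : z = (iet L π)^[k] y + (z - (iet L π)^[k] y) := by ring
      rw [this]
      exact hmem2.2
  have hTA : A ⊆ (iet L π) ⁻¹' A := by
    intro z hz
    rw [hA, Set.mem_iUnion] at hz
    obtain ⟨k, hk⟩ := hz
    rw [Set.mem_iUnion] at hk
    obtain ⟨hkp, hz⟩ := hk
    rw [Finset.mem_range] at hkp
    set s := z - (iet L π)^[k] y with hsdef
    have hs0 : 0 ≤ s := by simp [hsdef]; linarith [hz.1]
    have hsε : s < ε := by simp [hsdef]; linarith [hz.2]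
    have hzeq : z = (iet L π)^[k] y + s := by simp [hsdef]
    have h1 := hrig s hs0 (lt_trans hsε hεη) k (by omega)
    have h2 := hrig s hs0 (lt_trans hsε hεη) (k+1) (by omega)
    rw [Set.mem_preimage]
    have : iet L π z = (iet L π)^[k+1] y + s := by
      rw [hzeq, ← h1, ← Function.iterate_succ_apply' (iet L π) k (y + s), h2]
    rw [this]
    rcases Nat.lt_or_ge (k+1) p with h | h
    · rw [hA, Set.mem_iUnion]
      exact ⟨k+1, Set.mem_iUnion.mpr ⟨Finset.mem_range.mpr h, ⟨by linarith, by linarith⟩⟩⟩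
    · have hkp1 : k + 1 = p := by omega
      rw [hA, Set.mem_iUnion]
      refine ⟨0, Set.mem_iUnion.mpr ⟨Finset.mem_range.mpr (by omega), ?_⟩⟩
      rw [hkp1, hper]
      simp only [Function.iterate_zero_apply]
      exact ⟨by linarith, by linarith⟩
  have h1 : lam (A \ (iet L π) ⁻¹' A) = 0 := by
    rw [Set.diff_eq_empty.mpr hTA, measure_empty]
  have h2 : lam ((iet L π) ⁻¹' A \ A) = 0 := by
    have e1 := measure_diff_add_inter (μ := lam) ((iet L π) ⁻¹' A) hAm
    rw [Set.inter_eq_right.mpr hTA, iet_preserving hL π hAm] at e1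
    exact (ENNReal.add_left_inj (lam_ne_top A)).mp (by rw [zero_add]; exact e1)
  have hTm : Measurable (iet L π) := measurable_iet hL π
  rcases hull hTm (fun {C} hC => iet_preserving hL π hC) (fun t ht => iet_id hL π ht)
      hErg hAm hAsub h1 h2 with h0 | hone
  · -- measure at least ε > 0
    have : lam (Set.Ico y (y + ε)) ≤ lam A := by
      apply measure_mono
      intro z hz
      rw [hA, Set.mem_iUnion]
      exact ⟨0, Set.mem_iUnion.mpr ⟨Finset.mem_range.mpr (by omega), by simpa using hz⟩⟩
    rw [h0, lam_Ico_inside hy.1 (by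
      have : ε ≤ (1 - y) / 2 := min_le_right _ _
      linarith)] at this
    have : ENNReal.ofReal ε = 0 := by
      refine le_antisymm ?_ (by positivity)
      rw [add_sub_cancel_left] at this
      exact this
    rw [ENNReal.ofReal_eq_zero] at this
    linarith
  · -- measure at most p * ε ≤ 1/2 < 1
    have hle : lam A ≤ ∑ k ∈ Finset.range p, lam (Set.Ico ((iet L π)^[k] y) ((iet L π)^[k] y + ε)) :=
      measure_biUnion_finset_le _ _
    have hterm : ∀ k ∈ Finset.range p,
        lam (Set.Ico ((iet L π)^[k] y) ((iet L π)^[k] y + ε)) ≤ ENNReal.ofReal ε := by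
      intro k _
      have : lam (Set.Ico ((iet L π)^[k] y) ((iet L π)^[k] y + ε)) ≤
          volume (Set.Ico ((iet L π)^[k] y) ((iet L π)^[k] y + ε)) := by
        rw [lam, Measure.restrict_apply measurableSet_Ico]
        exact measure_mono Set.inter_subset_left
      rw [Real.volume_Ico] at this
      convert this using 2
      ring
    have hle2 : lam A ≤ p * ENNReal.ofReal ε := by
      calc lam A ≤ _ := hle
        _ ≤ ∑ _k ∈ Finset.range p, ENNReal.ofReal ε := Finset.sum_le_sum hterm
        _ = p * ENNReal.ofReal ε := by rw [Finset.sum_const, Finset.card_range, nsmul_eq_mul]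
    have hhalf : (p : ENNReal) * ENNReal.ofReal ε ≤ ENNReal.ofReal (1/2) := by
      have : (p : ENNReal) * ENNReal.ofReal ε = ENNReal.ofReal (p * ε) := by
        rw [ENNReal.ofReal_mul (by positivity)]
        congr 1
        simp
      rw [this]
      apply ENNReal.ofReal_le_ofReal
      have hp0 : (0:ℝ) < p := by exact_mod_cast hp
      calc (p:ℝ) * ε ≤ p * (1 / (2*p)) := by
            apply mul_le_mul_of_nonneg_left hεp (le_of_lt hp0)
        _ = 1/2 := by field_simp
    rw [hone] at hle2
    have : (1 : ENNReal) ≤ ENNReal.ofReal (1/2) := le_trans hle2 hhalf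
    rw [show (1 : ENNReal) = ENNReal.ofReal 1 by simp] at this
    rw [ENNReal.ofReal_le_ofReal_iff (by norm_num)] at this
    linarith

theorem iet_inv_iterate {L : Fin d → ℝ} (hL : L ∈ simplexSet d) (π : Equiv.Perm (Fin d))
    (k : ℕ) (z : ℝ) :
    (iet (fun j => L (π.symm j)) π.symm)^[k] ((iet L π)^[k] z) = z := by
  induction k with
  | zero => rfl
  | succ k ih =>
    rw [Function.iterate_succ_apply' (iet L π),
      Function.iterate_succ_apply (iet (fun j => L (π.symm j)) π.symm),
      iet_inv_comp hL π]
    exact ih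

theorem iet_iterate_inj {L : Fin d → ℝ} (hL : L ∈ simplexSet d) (π : Equiv.Perm (Fin d))
    (k : ℕ) {z z' : ℝ} (h : (iet L π)^[k] z = (iet L π)^[k] z') : z = z' := by
  have h1 := iet_inv_iterate hL π k z
  rw [h, iet_inv_iterate hL π k z'] at h1
  exact h1.symm

theorem lam_Ioo_inside {u v : ℝ} (hu : 0 ≤ u) (hv : v ≤ 1) :
    lam (Set.Ioo u v) = ENNReal.ofReal (v - u) := by
  rw [lam, Measure.restrict_apply measurableSet_Ioo]
  have : Set.Ioo u v ∩ Set.Ico (0:ℝ) 1 = Set.Ioo u v := by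
    rw [Set.inter_eq_left]
    intro t ht
    exact ⟨le_trans hu ht.1.le, lt_of_lt_of_le ht.2 hv⟩
  rw [this, Real.volume_Ioo]

theorem no_orbit_repeat {L : Fin d → ℝ} (hL : L ∈ simplexSet d) (π : Equiv.Perm (Fin d))
    (hErg : ergodicOn01 (iet L π)) {x : ℝ} (hx : x ∈ Set.Ico (0:ℝ) 1) {N N' : ℕ}
    (hNN : N < N') (h : (iet L π)^[N] x = (iet L π)^[N'] x) : False := by
  have hy : (iet L π)^[N] x ∈ Set.Ico (0:ℝ) 1 := iterate_mem_Ico hL π hx N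
  apply no_periodic hL π hErg hy (p := N' - N) (by omega)
  have h2 : (iet L π)^[N' - N] ((iet L π)^[N] x) = (iet L π)^[N' - N + N] x :=
    (Function.iterate_add_apply _ _ _ _).symm
  rw [h2, show N' - N + N = N' by omega, ← h]

/-- Key minimality statement: the forward orbit of every point of `[0,1)` enters every
subinterval `[a,b) ⊆ [0,1)` at a positive time. -/
theorem orbit_enters {L : Fin d → ℝ} (hL : L ∈ simplexSet d) (π : Equiv.Perm (Fin d))
    (hErg : ergodicOn01 (iet L π)) {x : ℝ} (hx : x ∈ Set.Ico (0:ℝ) 1)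
    {a b : ℝ} (ha : 0 ≤ a) (hab : a < b) (hb : b ≤ 1) :
    ∃ i, 1 ≤ i ∧ (iet L π)^[i] x ∈ Set.Ico a b := by
  classical
  by_contra hav
  push_neg at hav
  -- notation
  set T : ℝ → ℝ := iet L π with hT
  set J : Set ℝ := Set.Ico a b with hJ
  have hTm : Measurable T := measurable_iet hL π
  have hJm : MeasurableSet J := measurableSet_Ico
  have hIcoJ : J ⊆ Set.Ico (0:ℝ) 1 := fun t ht => ⟨le_trans ha ht.1, lt_of_lt_of_le ht.2 hb⟩
  have horb : ∀ i : ℕ, T^[i] x ∈ Set.Ico (0:ℝ) 1 := iterate_mem_Ico hL π hx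
  -- Poincaré : the set of points of J that never return is lam-null
  have hNR : lam {w | w ∈ J ∧ ∀ n, 1 ≤ n → T^[n] w ∉ J} = 0 := by
    set V : Set ℝ := ⋃ n : ℕ, (T^[n]) ⁻¹' J with hV
    have hVm : MeasurableSet V := MeasurableSet.iUnion fun n => (hTm.iterate n) hJm
    have hTVm : MeasurableSet (T ⁻¹' V) := hTm hVm
    have hTVsub : T ⁻¹' V ⊆ V := by
      rw [hV, Set.preimage_iUnion]
      apply Set.iUnion_subset
      intro n
      intro z hz
      rw [Set.mem_preimage, Set.mem_preimage, ← Function.iterate_succ_apply] at hz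
      exact Set.mem_iUnion.mpr ⟨n + 1, hz⟩
    have hsubdiff : {w | w ∈ J ∧ ∀ n, 1 ≤ n → T^[n] w ∉ J} ⊆ V \ T ⁻¹' V := by
      rintro w ⟨hwJ, hwn⟩
      constructor
      · exact Set.mem_iUnion.mpr ⟨0, hwJ⟩
      · intro hw
        rw [Set.mem_preimage, hV, Set.mem_iUnion] at hw
        obtain ⟨n, hn⟩ := hw
        rw [Set.mem_preimage, ← Function.iterate_succ_apply] at hn
        exact hwn (n+1) (by omega) hn
    have hdiffnull : lam (V \ T ⁻¹' V) = 0 := by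
      have e1 := measure_diff_add_inter (μ := lam) V hTVm
      rw [Set.inter_eq_right.mpr hTVsub, iet_preserving hL π hVm] at e1
      exact (ENNReal.add_left_inj (lam_ne_top V)).mp (by rw [zero_add]; exact e1)
    exact le_antisymm (le_trans (measure_mono hsubdiff) (le_of_eq hdiffnull)) (zero_le)
  -- milestones and cut points
  set P : Set ℝ := ↑(P0 L) ∪ {a, b} with hP
  have hPfin : P.Finite := (Finset.finite_toSet _).union ((Set.finite_singleton b).insert a)
  set Cut : Set ℝ := {u | u ∈ J ∧ ∃ k : ℕ, T^[k] u ∈ P ∧ ∀ i, 1 ≤ i → i < k → T^[i] u ∉ J}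
    with hCut
  have hCutFin : Cut.Finite := by
    have hsub : Cut ⊆ (J ∩ P) ∪ ⋃ p ∈ P,
        {u | u ∈ J ∧ ∃ k, 1 ≤ k ∧ T^[k] u = p ∧ ∀ i, 1 ≤ i → i < k → T^[i] u ∉ J} := by
      rintro u ⟨huJ, k, hkP, hki⟩
      rcases Nat.eq_zero_or_pos k with rfl | hk
      · exact Or.inl ⟨huJ, hkP⟩
      · exact Or.inr (Set.mem_iUnion.mpr ⟨T^[k] u, Set.mem_iUnion.mpr
          ⟨hkP, huJ, k, hk, rfl, hki⟩⟩)
    apply Set.Finite.subset _ hsub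
    apply Set.Finite.union (hPfin.inter_of_right J)
    apply Set.Finite.biUnion hPfin
    intro p _
    apply Set.Subsingleton.finite
    rintro u ⟨huJ, k, hk1, hkp, hki⟩ u' ⟨huJ', k', hk1', hkp', hki'⟩
    rcases lt_trichotomy k k' with hlt | heq | hlt
    · exfalso
      have hv : T^[k] (T^[k'-k] u') = T^[k] u := by
        rw [← Function.iterate_add_apply, show k + (k' - k) = k' by omega, hkp', hkp]
      have := iet_iterate_inj hL π k hv
      exact hki' (k' - k) (by omega) (by omega) (by rw [this]; exact huJ)
    · subst heq
      exact iet_iterate_inj hL π k (by rw [hkp, hkp'])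
    · exfalso
      have hv : T^[k'] (T^[k-k'] u) = T^[k'] u' := by
        rw [← Function.iterate_add_apply, show k' + (k - k') = k by omega, hkp, hkp']
      have := iet_iterate_inj hL π k' hv
      exact hki (k - k') (by omega) (by omega) (by rw [this]; exact huJ')
  -- the finite grid
  set Qf : Finset ℝ := insert a hCutFin.toFinset with hQf
  have hQJ : ∀ q ∈ Qf, a ≤ q ∧ q < b := by
    intro q hq
    rw [hQf, Finset.mem_insert] at hq
    rcases hq with rfl | hq
    · exact ⟨le_refl _, hab⟩
    · rw [Set.Finite.mem_toFinset] at hq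
      exact ⟨hq.1.1, hq.1.2⟩
  set nxt : ℝ → ℝ := fun q =>
    (insert b (Qf.filter (fun p => q < p))).min' ⟨b, Finset.mem_insert_self _ _⟩ with hnxt
  have hnxt_mem : ∀ q, nxt q = b ∨ nxt q ∈ Qf := by
    intro q
    have := (insert b (Qf.filter (fun p => q < p))).min'_mem ⟨b, Finset.mem_insert_self _ _⟩
    rw [Finset.mem_insert] at this
    rcases this with h | h
    · exact Or.inl h
    · exact Or.inr (Finset.mem_filter.mp h).1
  have hnxt_gt : ∀ q ∈ Qf, q < nxt q := by
    intro q hq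
    have hmem := (insert b (Qf.filter (fun p => q < p))).min'_mem ⟨b, Finset.mem_insert_self _ _⟩
    rw [Finset.mem_insert] at hmem
    have hgoal : q < (insert b (Qf.filter (fun p => q < p))).min'
        ⟨b, Finset.mem_insert_self _ _⟩ := by
      rcases hmem with h | h
      · rw [h]; exact (hQJ q hq).2
      · exact (Finset.mem_filter.mp h).2
    exact hgoal
  have hnxt_le_b : ∀ q, nxt q ≤ b := fun q =>
    Finset.min'_le _ b (Finset.mem_insert_self _ _)
  have hnxt_gap : ∀ q, ∀ p ∈ Qf, q < p → nxt q ≤ p := by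
    intro q p hp hqp
    exact Finset.min'_le _ p (Finset.mem_insert_of_mem (Finset.mem_filter.mpr ⟨hp, hqp⟩))
  have hCLsub : ∀ q ∈ Qf, Set.Ioo q (nxt q) ⊆ J := by
    intro q hq v hv
    exact ⟨le_trans (hQJ q hq).1 hv.1.le, lt_of_lt_of_le hv.2 (hnxt_le_b q)⟩
  have hCLcut : ∀ q ∈ Qf, ∀ v ∈ Set.Ioo q (nxt q), v ∉ Cut := by
    intro q hq v hv hvC
    have hvQ : v ∈ Qf := by
      rw [hQf, Finset.mem_insert]
      exact Or.inr ((Set.Finite.mem_toFinset _).mpr hvC)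
    exact absurd (hnxt_gap q v hvQ hv.1) (not_le.mpr hv.2)
  have hCLcover : ∀ w ∈ J, w ∉ (↑Qf : Set ℝ) → ∃ q ∈ Qf, w ∈ Set.Ioo q (nxt q) := by
    intro w hwJ hwQ
    have hne : (Qf.filter (fun p => p ≤ w)).Nonempty :=
      ⟨a, Finset.mem_filter.mpr ⟨Finset.mem_insert_self _ _, hwJ.1⟩⟩
    set q := (Qf.filter (fun p => p ≤ w)).max' hne with hq
    have hqmem : q ∈ Qf := (Finset.mem_filter.mp ((Qf.filter (fun p => p ≤ w)).max'_mem hne)).1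
    have hqle : q ≤ w := (Finset.mem_filter.mp ((Qf.filter (fun p => p ≤ w)).max'_mem hne)).2
    refine ⟨q, hqmem, lt_of_le_of_ne hqle ?_, ?_⟩
    · intro h; exact hwQ (by rw [← h]; exact hqmem)
    · by_contra hge
      push_neg at hge
      rcases hnxt_mem q with h | h
      · rw [h] at hge; exact absurd hwJ.2 (not_lt.mpr hge)
      · have hle : nxt q ≤ (Qf.filter (fun p => p ≤ w)).max' hne :=
          Finset.le_max' (Qf.filter (fun p => p ≤ w)) (nxt q)
            (Finset.mem_filter.mpr ⟨h, hge⟩)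
        rw [← hq] at hle
        exact absurd (hnxt_gt q hqmem) (not_lt.mpr hle)
  -- the synchronization lemma
  have haP : a ∈ P := Set.mem_union_right _ (Set.mem_insert _ _)
  have hbP : b ∈ P := Set.mem_union_right _ (Set.mem_insert_of_mem _ rfl)
  have sync : ∀ w w' : ℝ, w ∈ J → w' ∈ J → w ≤ w' →
      (∀ u, u ∈ Set.Ioc w w' → u ∉ Cut) →
      ∀ r : ℕ, (∀ i, 1 ≤ i → i < r → (T^[i] w ∉ J ∨ T^[i] w' ∉ J)) →
      (∀ k, k ≤ r → ∀ v, w ≤ v → v ≤ w' → T^[k] v = T^[k] w + (v - w)) ∧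
      (∀ k, k ≤ r → ∀ p, p ∈ P → ¬ (T^[k] w < p ∧ p ≤ T^[k] w')) ∧
      (∀ i, 1 ≤ i → i < r → ∀ t, T^[i] w ≤ t → t ≤ T^[i] w' → t ∉ J) := by
    intro w w' hwJ hw'J hle hfree r hno
    have hS : ∀ k, k ≤ r → ∀ m, m ≤ k →
        ((∀ v, w ≤ v → v ≤ w' → T^[m] v = T^[m] w + (v - w)) ∧
         (∀ p, p ∈ P → ¬ (T^[m] w < p ∧ p ≤ T^[m] w'))) := by
      intro k
      induction k with
      | zero =>
        intro _ m hm
        obtain rfl : m = 0 := by omega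
        constructor
        · intro v _ _; simp
        · rintro p hpP ⟨hp1, hp2⟩
          simp only [Function.iterate_zero_apply] at hp1 hp2
          have hpJ : p ∈ J := ⟨le_trans hwJ.1 hp1.le, lt_of_le_of_lt hp2 hw'J.2⟩
          exact hfree p ⟨hp1, hp2⟩ ⟨hpJ, 0, by simpa using hpP,
            fun i hi1 hi0 => absurd hi0 (by omega)⟩
      | succ k ih =>
        intro hk1 m hm
        rcases Nat.lt_or_ge m (k+1) with hmk | hmk
        · exact ih (by omega) m (by omega)
        obtain rfl : m = k + 1 := by omega
        have ihk := ih (by omega)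
        have hwk : T^[k] w ∈ Set.Ico (0:ℝ) 1 := iterate_mem_Ico hL π (hIcoJ hwJ) k
        have hw'keq : T^[k] w' = T^[k] w + (w' - w) := (ihk k le_rfl).1 w' hle le_rfl
        -- next milestone beyond the segment
        have hgt : T^[k] w' < nxtP L (T^[k] w) hwk.2 := by
          by_contra hcon
          push_neg at hcon
          exact (ihk k le_rfl).2 (nxtP L (T^[k] w) hwk.2)
            (Set.mem_union_left _ (Finset.mem_coe.mpr (nxtP_mem hwk.2)))
            ⟨nxtP_gt hwk.2, hcon⟩
        have hrig1 : ∀ v, w ≤ v → v ≤ w' → T^[k+1] v = T^[k+1] w + (v - w) := by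
          intro v hv1 hv2
          rw [Function.iterate_succ_apply', Function.iterate_succ_apply',
            (ihk k le_rfl).1 v hv1 hv2]
          exact step_rigid hL π hwk (by linarith) (by
            have : T^[k] w + (v - w) ≤ T^[k] w' := by rw [hw'keq]; linarith
            linarith)
        refine ⟨hrig1, ?_⟩
        rintro p hpP ⟨hp1, hp2⟩
        have hw'k1 : T^[k+1] w' = T^[k+1] w + (w' - w) := hrig1 w' hle le_rfl
        set u := w + (p - T^[k+1] w) with hudef
        have hu1 : w < u := by rw [hudef]; linarith
        have hu2 : u ≤ w' := by
          rw [hudef]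
          rw [hw'k1] at hp2
          linarith
        have huk : T^[k+1] u = p := by
          rw [hrig1 u hu1.le hu2, hudef]; ring
        have hnotJ : ∀ i, 1 ≤ i → i ≤ k → ∀ t, T^[i] w ≤ t → t ≤ T^[i] w' → t ∉ J := by
          intro i hi1 hik t ht1 ht2 htJ
          have hPi := (ihk i (by omega)).2
          have hwa : a ≤ T^[i] w := by
            by_contra hcon
            push_neg at hcon
            exact hPi a haP ⟨hcon, le_trans htJ.1 ht2⟩
          have hwb : T^[i] w < b := lt_of_le_of_lt ht1 htJ.2
          have hw'b : T^[i] w' < b := by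
            by_contra hcon
            push_neg at hcon
            exact hPi b hbP ⟨hwb, hcon⟩
          have hww : T^[i] w ≤ T^[i] w' := by
            rw [(ihk i (by omega)).1 w' hle le_rfl]; linarith
          rcases hno i hi1 (by omega) with h | h
          · exact h ⟨hwa, hwb⟩
          · exact h ⟨le_trans hwa hww, hw'b⟩
        have hucut : u ∈ Cut := by
          refine ⟨⟨le_trans hwJ.1 hu1.le, lt_of_le_of_lt hu2 hw'J.2⟩, k+1, ?_, ?_⟩
          · rw [huk]; exact hpP
          · intro i hi1 hik
            have hik' : i ≤ k := by omega
            have hiu : T^[i] u = T^[i] w + (u - w) := (ihk i hik').1 u hu1.le hu2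
            have hiw' : T^[i] w' = T^[i] w + (w' - w) := (ihk i hik').1 w' hle le_rfl
            apply hnotJ i hi1 hik' (T^[i] u)
            · rw [hiu]; linarith
            · rw [hiu, hiw']; linarith
        exact hfree u ⟨hu1, hu2⟩ hucut
    refine ⟨fun k hk => (hS k hk k le_rfl).1, fun k hk => (hS k hk k le_rfl).2, ?_⟩
    intro i hi1 hir t ht1 ht2 htJ
    have hPi := (hS i (by omega) i le_rfl).2
    have hwa : a ≤ T^[i] w := by
      by_contra hcon
      push_neg at hcon
      exact hPi a haP ⟨hcon, le_trans htJ.1 ht2⟩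
    have hwb : T^[i] w < b := lt_of_le_of_lt ht1 htJ.2
    have hw'b : T^[i] w' < b := by
      by_contra hcon
      push_neg at hcon
      exact hPi b hbP ⟨hwb, hcon⟩
    have hww : T^[i] w ≤ T^[i] w' := by
      rw [(hS i (by omega) i le_rfl).1 w' hle le_rfl]; linarith
    rcases hno i hi1 hir with h | h
    · exact h ⟨hwa, hwb⟩
    · exact h ⟨le_trans hwa hww, hw'b⟩
  -- each grid interval returns uniformly
  have hmidIoo : ∀ q ∈ Qf, (q + nxt q)/2 ∈ Set.Ioo q (nxt q) := by
    intro q hq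
    have := hnxt_gt q hq
    constructor <;> [linarith; linarith]
  have hCLmain : ∀ q ∈ Qf, ∃ r : ℕ, 1 ≤ r ∧ ∀ v ∈ Set.Ioo q (nxt q),
      (T^[r] v ∈ J) ∧ (∀ i, 1 ≤ i → i < r → T^[i] v ∉ J) ∧
      (∀ k, k ≤ r → T^[k] v = T^[k] ((q + nxt q)/2) + (v - (q + nxt q)/2)) := by
    intro q hq
    set m := (q + nxt q)/2 with hm
    have hmIoo : m ∈ Set.Ioo q (nxt q) := hmidIoo q hq
    have hmJ : m ∈ J := hCLsub q hq hmIoo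
    -- auxiliary: transfer of return from any returning point to any other point
    have htrans : ∀ v v' : ℝ, v ∈ Set.Ioo q (nxt q) → v' ∈ Set.Ioo q (nxt q) →
        ∀ n, 1 ≤ n → T^[n] v ∈ J → (∀ i, 1 ≤ i → i < n → T^[i] v ∉ J) →
        (T^[n] v' ∈ J) ∧ (∀ i, 1 ≤ i → i < n → T^[i] v' ∉ J) ∧
        (∀ k, k ≤ n → T^[k] v' = T^[k] v + (v' - v)) := by
      intro v v' hv hv' n hn1 hnJ hmin
      have hvJ : v ∈ J := hCLsub q hq hv
      have hv'J : v' ∈ J := hCLsub q hq hv'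
      rcases le_total v v' with hvv | hvv
      · have hfree : ∀ u, u ∈ Set.Ioc v v' → u ∉ Cut := by
          intro u hu
          exact hCLcut q hq u ⟨lt_trans hv.1 hu.1, lt_of_le_of_lt hu.2 hv'.2⟩
        obtain ⟨hrig, hPc, hnJ2⟩ := sync v v' hvJ hv'J hvv hfree n
          (fun i h1 h2 => Or.inl (hmin i h1 h2))
        have hva : a ≤ T^[n] v := hnJ.1
        have hrn : T^[n] v' = T^[n] v + (v' - v) := hrig n le_rfl v' hvv le_rfl
        have hv'b : T^[n] v' < b := by
          by_contra hcon
          push_neg at hcon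
          exact hPc n le_rfl b hbP ⟨hnJ.2, hcon⟩
        refine ⟨⟨by rw [hrn]; linarith, hv'b⟩, ?_, ?_⟩
        · intro i h1 h2
          apply hnJ2 i h1 h2 (T^[i] v')
          · rw [hrig i (by omega) v' hvv le_rfl]; linarith
          · exact le_refl _
        · intro k hk
          rw [hrig k hk v' hvv le_rfl]
      · have hfree : ∀ u, u ∈ Set.Ioc v' v → u ∉ Cut := by
          intro u hu
          exact hCLcut q hq u ⟨lt_trans hv'.1 hu.1, lt_of_le_of_lt hu.2 hv.2⟩
        obtain ⟨hrig, hPc, hnJ2⟩ := sync v' v hv'J hvJ hvv hfree n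
          (fun i h1 h2 => Or.inr (hmin i h1 h2))
        have hrn : T^[n] v = T^[n] v' + (v - v') := hrig n le_rfl v hvv le_rfl
        have hv'a : a ≤ T^[n] v' := by
          by_contra hcon
          push_neg at hcon
          exact hPc n le_rfl a haP ⟨hcon, by rw [hrn] at hnJ; linarith [hnJ.1]⟩
        refine ⟨⟨hv'a, by rw [hrn] at hnJ; linarith [hnJ.2]⟩, ?_, ?_⟩
        · intro i h1 h2
          apply hnJ2 i h1 h2 (T^[i] v')
          · exact le_refl _
          · rw [hrig i (by omega) v hvv le_rfl]; linarith
        · intro k hk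
          have := hrig k hk v hvv le_rfl
          linarith
    -- the midpoint returns
    have hmret : ∃ n, 1 ≤ n ∧ T^[n] m ∈ J := by
      by_contra hcon
      push_neg at hcon
      -- then no point of the interval returns, contradicting Poincaré
      have hallNR : Set.Ioo q (nxt q) ⊆ {w | w ∈ J ∧ ∀ n, 1 ≤ n → T^[n] w ∉ J} := by
        intro v hv
        refine ⟨hCLsub q hq hv, ?_⟩
        intro n hn1 hnJ
        -- take the first return of v
        have hex : ∃ n, 1 ≤ n ∧ T^[n] v ∈ J := ⟨n, hn1, hnJ⟩
        set n₀ := Nat.find hex with hn₀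
        obtain ⟨hn₀1, hn₀J⟩ := Nat.find_spec hex
        have hmin : ∀ i, 1 ≤ i → i < n₀ → T^[i] v ∉ J := by
          intro i h1 h2 hJi
          exact Nat.find_min hex h2 ⟨h1, hJi⟩
        have := (htrans v m hv hmIoo n₀ hn₀1 hn₀J hmin).1
        exact hcon n₀ hn₀1 this
      have hpos : 0 < lam (Set.Ioo q (nxt q)) := by
        rw [lam_Ioo_inside (le_trans ha (hQJ q hq).1) (le_trans (hnxt_le_b q) hb)]
        rw [ENNReal.ofReal_pos]
        linarith [hnxt_gt q hq]
      rw [← le_zero_iff.mp (le_trans (measure_mono hallNR) (le_of_eq hNR))] at hpos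
      exact lt_irrefl _ hpos
    set r := Nat.find hmret with hr
    obtain ⟨hr1, hrJ⟩ := Nat.find_spec hmret
    have hrmin : ∀ i, 1 ≤ i → i < r → T^[i] m ∉ J := by
      intro i h1 h2 hJi
      exact Nat.find_min hmret h2 ⟨h1, hJi⟩
    refine ⟨r, hr1, ?_⟩
    intro v hv
    exact htrans m v hmIoo hv r hr1 hrJ hrmin
  choose! rq hrq1 hrq2 using hCLmain
  set H := Qf.sup rq with hH
  -- the full-measure tower
  set Z : Set ℝ := ⋃ q ∈ Qf, ⋃ k ∈ Finset.range (rq q),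
    Set.Ioo (T^[k] ((q + nxt q)/2) - ((q + nxt q)/2 - q))
      (T^[k] ((q + nxt q)/2) + (nxt q - (q + nxt q)/2)) with hZ
  have hZm : MeasurableSet Z :=
    Finset.measurableSet_biUnion _ (fun q _ =>
      Finset.measurableSet_biUnion _ (fun k _ => measurableSet_Ioo))
  have hZiff : ∀ z, z ∈ Z ↔ ∃ q ∈ Qf, ∃ k < rq q, ∃ v ∈ Set.Ioo q (nxt q), T^[k] v = z := by
    intro z
    rw [hZ]
    simp only [Set.mem_iUnion, Finset.mem_range]
    constructor
    · rintro ⟨q, hq, k, hk, hz⟩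
      refine ⟨q, hq, k, hk, (q + nxt q)/2 + (z - T^[k] ((q + nxt q)/2)), ?_, ?_⟩
      · obtain ⟨h1, h2⟩ := hz
        constructor <;> [linarith; linarith]
      · rw [(hrq2 q hq _ ?_).2.2 k (le_of_lt hk)]
        · ring
        · obtain ⟨h1, h2⟩ := hz
          constructor <;> [linarith; linarith]
    · rintro ⟨q, hq, k, hk, v, hv, rfl⟩
      refine ⟨q, hq, k, hk, ?_⟩
      rw [(hrq2 q hq v hv).2.2 k (le_of_lt hk)]
      obtain ⟨h1, h2⟩ := hv
      constructor <;> [linarith; linarith]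
  have hZIco : Z ⊆ Set.Ico (0:ℝ) 1 := by
    intro z hz
    obtain ⟨q, hq, k, _, v, hv, rfl⟩ := (hZiff z).mp hz
    exact iterate_mem_Ico hL π (hIcoJ (hCLsub q hq hv)) k
  have hZT : ∀ z ∈ Z, T z ∈ Z ∪ ↑Qf := by
    intro z hz
    obtain ⟨q, hq, k, hk, v, hv, rfl⟩ := (hZiff z).mp hz
    have hTz : T (T^[k] v) = T^[k+1] v := (Function.iterate_succ_apply' T k v).symm
    rcases Nat.lt_or_ge (k+1) (rq q) with h | h
    · left
      rw [hTz]
      exact (hZiff _).mpr ⟨q, hq, k+1, h, v, hv, rfl⟩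
    · have hkeq : k + 1 = rq q := by omega
      have hretJ : T^[rq q] v ∈ J := (hrq2 q hq v hv).1
      rw [hTz, hkeq]
      by_cases hQ : T^[rq q] v ∈ (↑Qf : Set ℝ)
      · exact Or.inr hQ
      · obtain ⟨q', hq', hv'⟩ := hCLcover _ hretJ hQ
        exact Or.inl ((hZiff _).mpr ⟨q', hq', 0, (by have := hrq1 q' hq'; omega), _, hv', rfl⟩)
  -- measure of Z is 0 or 1 via the exactly invariant hull
  have hitp : ∀ n : ℕ, ∀ C : Set ℝ, MeasurableSet C → lam ((T^[n]) ⁻¹' C) = lam C := by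
    intro n
    induction n with
    | zero => intro C _; simp
    | succ n ih =>
      intro C hC
      rw [Function.iterate_succ, Set.preimage_comp, iet_preserving hL π ((hTm.iterate n) hC),
        ih C hC]
  have hZ1 : lam Z = 1 := by
    set Junk : Set ℝ := ⋃ n : ℕ, T^[n] '' (↑Qf) with hJunk
    have hJcnt : Junk.Countable :=
      Set.countable_iUnion (fun n => ((Qf.finite_toSet).image _).countable)
    have hJnull : lam Junk = 0 := by
      have := hJcnt.measure_zero (volume : Measure ℝ)
      refine le_antisymm (le_trans ?_ (le_of_eq this)) (zero_le)
      rw [lam]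
      exact Measure.restrict_apply_le _ _
    have hJIco : Junk ⊆ Set.Ico (0:ℝ) 1 := by
      rintro z ⟨s, ⟨n, rfl⟩, hz⟩
      obtain ⟨p0, hp0, rfl⟩ := hz
      have hp0' : p0 ∈ Set.Ico (0:ℝ) 1 := by
        rcases hQJ p0 hp0 with ⟨h1, h2⟩
        exact ⟨le_trans ha h1, lt_of_lt_of_le h2 hb⟩
      exact iterate_mem_Ico hL π hp0' n
    set Zh := Z ∪ Junk with hZh
    have hZhm : MeasurableSet Zh := hZm.union (hJcnt.measurableSet)
    have hZhT : ∀ z ∈ Zh, T z ∈ Zh := by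
      rintro z (hz | hz)
      · rcases hZT z hz with h | h
        · exact Or.inl h
        · refine Or.inr (Set.mem_iUnion.mpr ⟨0, ?_⟩)
          simpa using h
      · obtain ⟨s, ⟨n, rfl⟩, hzs⟩ := hz
        obtain ⟨p0, hp0, rfl⟩ := hzs
        refine Or.inr (Set.mem_iUnion.mpr ⟨n+1, ?_⟩)
        exact ⟨p0, hp0, Function.iterate_succ_apply' T n p0⟩
    have hmono2 : ∀ n : ℕ, (T^[n]) ⁻¹' Zh ⊆ (T^[n+1]) ⁻¹' Zh := by
      intro n z hz
      rw [Set.mem_preimage] at hz ⊢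
      rw [Function.iterate_succ_apply']
      exact hZhT _ hz
    set Hinf : Set ℝ := ⋃ n : ℕ, (T^[n]) ⁻¹' Zh with hHinf
    have hHm : MeasurableSet Hinf :=
      MeasurableSet.iUnion fun n => (hTm.iterate n) hZhm
    have hZhIco : Zh ⊆ Set.Ico (0:ℝ) 1 := Set.union_subset hZIco hJIco
    have hHIco : Hinf ⊆ Set.Ico (0:ℝ) 1 := by
      intro z hz
      obtain ⟨s, ⟨n, rfl⟩, hzs⟩ := hz
      by_contra hcon
      rw [Set.mem_preimage, iterate_id (fun t ht => iet_id hL π ht) hcon n] at hzs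
      exact hcon (hZhIco hzs)
    have hHinv : T ⁻¹' Hinf = Hinf := by
      apply Set.Subset.antisymm
      · rintro z hz
        rw [Set.mem_preimage, hHinf, Set.mem_iUnion] at hz
        obtain ⟨n, hn⟩ := hz
        rw [Set.mem_preimage, ← Function.iterate_succ_apply] at hn
        exact Set.mem_iUnion.mpr ⟨n+1, hn⟩
      · rintro z hz
        rw [hHinf, Set.mem_iUnion] at hz
        obtain ⟨n, hn⟩ := hz
        have := hmono2 n hn
        rw [Set.mem_preimage, Function.iterate_succ_apply] at this
        exact Set.mem_preimage.mpr (Set.mem_iUnion.mpr ⟨n, this⟩)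
    have h01 := hErg Hinf hHIco hHm hHinv
    have hHeq : lam Hinf = lam Zh := by
      rw [hHinf, Directed.measure_iUnion (Monotone.directed_le (monotone_nat_of_le_succ hmono2))]
      simp only [hitp _ Zh hZhm, iSup_const]
    have hZheq : lam Zh = lam Z := by
      apply le_antisymm
      · calc lam Zh ≤ lam Z + lam Junk := measure_union_le _ _
          _ = lam Z := by rw [hJnull, add_zero]
      · exact measure_mono Set.subset_union_left
    have hposZ : 0 < lam Z := by
      have hsub : Set.Ioo a (nxt a) ⊆ Z := by
        intro v hv
        exact (hZiff v).mpr ⟨a, Finset.mem_insert_self _ _, 0,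
          (by have := hrq1 a (Finset.mem_insert_self _ _); omega), v, hv, rfl⟩
      refine lt_of_lt_of_le ?_ (measure_mono hsub)
      rw [lam_Ioo_inside ha (le_trans (hnxt_le_b a) hb)]
      rw [ENNReal.ofReal_pos]
      linarith [hnxt_gt a (Finset.mem_insert_self _ _)]
    rcases h01 with h0 | h1
    · exfalso
      have : lam Z ≤ lam Hinf := by
        rw [hHeq, hZheq]
      rw [h0] at this
      exact absurd (le_antisymm this (zero_le)) (ne_of_gt hposZ)
    · rw [← hZheq, ← hHeq, h1]
  -- finite complement
  set Efin : Set ℝ := {0, 1} ∪ ⋃ q ∈ Qf, ⋃ k ∈ Finset.range (rq q),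
      ({T^[k] ((q + nxt q)/2) - ((q + nxt q)/2 - q)} ∪
       {T^[k] ((q + nxt q)/2) + (nxt q - (q + nxt q)/2)}) with hEfin
  have hEfinite : Efin.Finite := by
    apply Set.Finite.union (by simp)
    apply Set.Finite.biUnion (Qf.finite_toSet)
    intro q _
    apply Set.Finite.biUnion (Finset.finite_toSet _)
    intro k _
    exact (Set.finite_singleton _).union (Set.finite_singleton _)
  have hcompl : ∀ z ∈ Set.Ico (0:ℝ) 1, z ∉ Z → z ∈ Efin := by
    intro z hzI hzZ
    by_contra hzE
    have hleb : lam (Set.Ico (0:ℝ) 1 \ Z) = 0 := by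
      have e1 := measure_diff_add_inter (μ := lam) (Set.Ico (0:ℝ) 1) hZm
      rw [Set.inter_eq_right.mpr hZIco, hZ1] at e1
      have hIco1 : lam (Set.Ico (0:ℝ) 1) = 1 := by
        rw [lam, Measure.restrict_apply measurableSet_Ico, Set.inter_self, Real.volume_Ico]
        norm_num
      rw [hIco1] at e1
      exact (ENNReal.add_left_inj ENNReal.one_ne_top).mp (by rw [zero_add]; exact e1)
    -- find a ball around z missing Z
    have hEne : (hEfinite.toFinset).Nonempty := by
      refine ⟨0, ?_⟩
      rw [Set.Finite.mem_toFinset]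
      exact Or.inl (Set.mem_insert _ _)
    set δ := (hEfinite.toFinset).inf' hEne (fun e => |z - e|) with hδ
    have hδpos : 0 < δ := by
      rw [hδ, Finset.lt_inf'_iff]
      intro e he
      rw [Set.Finite.mem_toFinset] at he
      rw [abs_pos, sub_ne_zero]
      intro hc
      rw [hc] at hzE
      exact hzE he
    have hδe : ∀ e ∈ Efin, δ ≤ |z - e| := by
      intro e he
      exact Finset.inf'_le _ ((Set.Finite.mem_toFinset _).mpr he)
    have h0E : (0:ℝ) ∈ Efin := Or.inl (Set.mem_insert _ _)
    have h1E : (1:ℝ) ∈ Efin := Or.inl (Set.mem_insert_of_mem _ rfl)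
    have hz0 : δ ≤ z := by
      have := hδe 0 h0E
      rw [sub_zero, abs_of_nonneg hzI.1] at this
      exact this
    have hz1 : z + δ ≤ 1 := by
      have := hδe 1 h1E
      rw [abs_of_nonpos (by linarith [hzI.2])] at this
      linarith
    have hball : Set.Ioo (z - δ) (z + δ) ⊆ Set.Ico (0:ℝ) 1 \ Z := by
      intro t ht
      constructor
      · exact ⟨by linarith [ht.1], by linarith [ht.2]⟩
      · intro htZ
        rw [hZ, Set.mem_iUnion] at htZ
        obtain ⟨q, htZ⟩ := htZ
        rw [Set.mem_iUnion] at htZ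
        obtain ⟨hq, htZ⟩ := htZ
        rw [Set.mem_iUnion] at htZ
        obtain ⟨k, htZ⟩ := htZ
        rw [Set.mem_iUnion] at htZ
        obtain ⟨hk, htZ⟩ := htZ
        set u := T^[k] ((q + nxt q)/2) - ((q + nxt q)/2 - q) with hu
        set v := T^[k] ((q + nxt q)/2) + (nxt q - (q + nxt q)/2) with hv
        have huE : u ∈ Efin := by
          refine Or.inr (Set.mem_iUnion.mpr ⟨q, Set.mem_iUnion.mpr ⟨hq,
            Set.mem_iUnion.mpr ⟨k, Set.mem_iUnion.mpr ⟨hk, Or.inl rfl⟩⟩⟩⟩)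
        have hvE : v ∈ Efin := by
          refine Or.inr (Set.mem_iUnion.mpr ⟨q, Set.mem_iUnion.mpr ⟨hq,
            Set.mem_iUnion.mpr ⟨k, Set.mem_iUnion.mpr ⟨hk, Or.inr rfl⟩⟩⟩⟩)
        have hzuv : z ∉ Set.Ioo u v := by
          intro hzuv
          apply hzZ
          rw [hZ, Set.mem_iUnion]
          exact ⟨q, Set.mem_iUnion.mpr ⟨hq, Set.mem_iUnion.mpr ⟨k,
            Set.mem_iUnion.mpr ⟨hk, hzuv⟩⟩⟩⟩
        rcases le_or_gt z u with hcase | hcase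
        · have : u ≥ z + δ := by
            have := hδe u huE
            rw [abs_of_nonpos (by linarith)] at this
            linarith
          exact absurd htZ.1 (by linarith [ht.2])
        · rcases le_or_gt v z with hcase2 | hcase2
          · have : v ≤ z - δ := by
              have := hδe v hvE
              rw [abs_of_nonneg (by linarith)] at this
              linarith
            exact absurd htZ.2 (by linarith [ht.1])
          · exact hzuv ⟨hcase, hcase2⟩
    have : lam (Set.Ioo (z - δ) (z + δ)) ≤ lam (Set.Ico (0:ℝ) 1 \ Z) :=
      measure_mono hball
    rw [hleb, lam_Ioo_inside (by linarith) (by linarith)] at this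
    have h2δ : (0:ℝ) < z + δ - (z - δ) := by linarith
    rw [le_zero_iff, ENNReal.ofReal_eq_zero] at this
    linarith
  -- conclusion via pigeonhole on the orbit
  have hEf := hEfinite.toFinset
  set M := (hEfinite.toFinset).card with hM
  have hpigeon : ∃ N, H + 1 ≤ N ∧ T^[N] x ∉ Efin := by
    by_contra hcon
    push_neg at hcon
    have hmap : ∀ j ∈ Finset.range (M + 1), T^[H + 1 + j] x ∈ hEfinite.toFinset := by
      intro j _
      rw [Set.Finite.mem_toFinset]
      exact hcon (H + 1 + j) (by omega)
    have hcard : (hEfinite.toFinset).card < (Finset.range (M + 1)).card := by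
      rw [Finset.card_range]
      omega
    obtain ⟨j, hj, j', hj', hne, heq⟩ :=
      Finset.exists_ne_map_eq_of_card_lt_of_maps_to hcard hmap
    rcases Nat.lt_or_ge j j' with h | h
    · exact no_orbit_repeat hL π hErg hx (by omega : H + 1 + j < H + 1 + j') heq
    · have hlt : j' < j := by omega
      exact no_orbit_repeat hL π hErg hx (by omega : H + 1 + j' < H + 1 + j) heq.symm
  obtain ⟨N, hN, hNE⟩ := hpigeon
  have hNZ : T^[N] x ∈ Z := by
    by_contra hcon
    exact hNE (hcompl _ (horb N) hcon)
  obtain ⟨q, hq, k, hk, v, hv, hkv⟩ := (hZiff _).mp hNZ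
  have hkH : k < H + 1 := by
    have h5 : rq q ≤ H := by rw [hH]; exact Finset.le_sup hq
    omega
  have hNk : T^[k] (T^[N - k] x) = T^[k] v := by
    rw [← Function.iterate_add_apply, show k + (N - k) = N by omega, hkv]
  have hveq : T^[N - k] x = v := iet_iterate_inj hL π k hNk
  apply hav (N - k) (by omega)
  rw [hveq]
  exact hCLsub q hq hv

end Minimality


end IETAux



open IETAux

/-- zero-one law for the limsup sets of an ergodic IET (balls about orbits). -/
theorem ergodic_zero_one_law {d : ℕ} (L : Fin d → ℝ) (hL : L ∈ simplexSet d)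
    (π : Equiv.Perm (Fin d)) (hErg : ergodicOn01 (iet L π))
    (a : ℕ → ℝ) (hpos : ∀ i, 0 < a i) (hmono : ∀ m n, m ≤ n → a n ≤ a m) :
    (∀ x ∈ Set.Ico (0 : ℝ) 1,
      0 < lam (limsupSet fun i => Metric.ball ((iet L π)^[i] x) (a i)) →
      lam (limsupSet fun i => Metric.ball ((iet L π)^[i] x) (a i)) = 1) ∧
    (0 < lam {x | lam (limsupSet fun i => Metric.ball ((iet L π)^[i] x) (a i)) = 1} →
      ∀ᵐ x ∂lam,
        lam (limsupSet fun i => Metric.ball ((iet L π)^[i] x) (a i)) = 1) := by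
  have hL2 : (fun k => L (π.symm k)) ∈ simplexSet d := simplex_perm hL π.symm
  have hTm : Measurable (iet L π) := measurable_iet hL π
  have hSm : Measurable (iet (fun k => L (π.symm k)) π.symm) := measurable_iet hL2 π.symm
  have hTid : ∀ x, x ∉ Set.Ico (0:ℝ) 1 → iet L π x = x := fun x hx => iet_id hL π hx
  have hfin := lam_finite
  have hEm : ∀ x : ℝ, MeasurableSet (limsupSet fun i => Metric.ball ((iet L π)^[i] x) (a i)) :=
    fun x => MeasurableSet.iInter fun n => MeasurableSet.iUnion fun i =>
      MeasurableSet.iUnion fun _ => measurableSet_ball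
  constructor
  · -- part (i)
    intro x hx hpos'
    set T := iet L π with hTdef
    set E := limsupSet fun i => Metric.ball (T^[i] x) (a i) with hEdef
    set F := E ∩ Set.Ico (0:ℝ) 1 with hFdef
    have hFm : MeasurableSet F := (hEm x).inter measurableSet_Ico
    have hlamEF : lam E = lam F := by
      rw [lam, Measure.restrict_apply (hEm x), Measure.restrict_apply hFm, hFdef,
        Set.inter_assoc, Set.inter_self]
    by_cases hinf : ∀ θ : ℝ, 0 < θ → ∃ i, a i < θ
    · -- radii tend to zero
      have horb : ∀ i : ℕ, T^[i] x ∈ Set.Ico (0:ℝ) 1 := by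
        intro i
        induction i with
        | zero => exact hx
        | succ n ih => rw [Function.iterate_succ_apply']; exact iet_mem hL π ih
      set S := iet (fun k => L (π.symm k)) π.symm with hSdef
      set Γ : Set ℝ := Set.range (fun j : Fin d => pieceLeft (fun k => L (π.symm k)) j)
        with hΓdef
      have hd : 0 < d := simplex_dpos hL
      have key : F \ Γ ⊆ S ⁻¹' F := by
        rintro y ⟨⟨hyE, hyI⟩, hyΓ⟩
        have hSy : S y ∈ Set.Ico (0:ℝ) 1 := iet_mem hL2 π.symm hyI
        refine Set.mem_preimage.mpr ⟨?_, hSy⟩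
        rw [hEdef, mem_limsupSet] at hyE ⊢
        intro N
        have hne : (Finset.univ : Finset (Fin d)).Nonempty := ⟨⟨0, hd⟩, Finset.mem_univ _⟩
        set θ := Finset.univ.inf' hne
          (fun j => |y - pieceLeft (fun k => L (π.symm k)) j|) with hθdef
        have hθpos : 0 < θ := by
          rw [hθdef, Finset.lt_inf'_iff]
          intro j _
          rw [abs_pos, sub_ne_zero]
          intro h
          exact hyΓ ⟨j, h.symm⟩
        obtain ⟨i₀, hi₀⟩ := hinf θ hθpos
        obtain ⟨i, hiN, hyi⟩ := hyE (max (N+1) i₀)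
        have hiN1 : N + 1 ≤ i := le_trans (le_max_left _ _) hiN
        have hii₀ : i₀ ≤ i := le_trans (le_max_right _ _) hiN
        have hai : a i < θ := lt_of_le_of_lt (hmono i₀ i hii₀) hi₀
        rw [Metric.mem_ball, Real.dist_eq] at hyi
        rcases rigid_or_block hL2 π.symm hyI (horb i) with hrig | ⟨j, hblock⟩
        · obtain ⟨m, rfl⟩ : ∃ m, i = m + 1 := ⟨i - 1, by omega⟩
          have hSTm : S (T^[m+1] x) = T^[m] x := by
            rw [Function.iterate_succ_apply', hSdef, hTdef]
            exact iet_inv_comp hL π _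
          refine ⟨m, by omega, ?_⟩
          rw [Metric.mem_ball, Real.dist_eq]
          have habs : |S y - S (T^[m+1] x)| = |y - T^[m+1] x| := by
            rw [hrig]
          rw [hSTm] at habs
          rw [habs]
          exact lt_of_lt_of_le hyi (hmono m (m+1) (by omega))
        · exfalso
          have hθle : θ ≤ |y - pieceLeft (fun k => L (π.symm k)) j| := by
            rw [hθdef]
            exact Finset.inf'_le _ (Finset.mem_univ j)
          linarith [lt_of_le_of_lt hblock hyi]
      -- measure bookkeeping
      have hΓfin : Γ.Finite := Set.finite_range _
      have hΓ0 : lam Γ = 0 :=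
        le_antisymm (le_trans (le_of_eq (Measure.restrict_apply hΓfin.measurableSet))
          (le_trans (measure_mono Set.inter_subset_left)
            (le_of_eq (hΓfin.countable.measure_zero volume)))) (zero_le)
      have hSFm : MeasurableSet (S ⁻¹' F) := hSm hFm
      have h1 : lam (F \ S ⁻¹' F) = 0 := by
        refine le_antisymm (le_trans (measure_mono ?_) (le_of_eq hΓ0)) (zero_le)
        intro y hy
        by_contra hyΓ
        exact hy.2 (key ⟨hy.1, hyΓ⟩)
      have h2 : lam (S ⁻¹' F \ F) = 0 := by
        have e1 := measure_diff_add_inter (μ := lam) (S ⁻¹' F) hFm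
        have e2 := measure_diff_add_inter (μ := lam) F hSFm
        rw [h1, zero_add] at e2
        rw [iet_preserving hL2 π.symm hFm] at e1
        rw [Set.inter_comm] at e1
        rw [e2] at e1
        exact (ENNReal.add_left_inj (lam_ne_top F)).mp (by rw [zero_add]; exact e1)
      have hTpre : ∀ U : Set ℝ, T ⁻¹' (S ⁻¹' U) = U := by
        intro U
        ext w
        simp only [Set.mem_preimage, hSdef, hTdef]
        rw [iet_inv_comp hL π w]
      have hT1 : lam (F \ T ⁻¹' F) = 0 := by
        have heq : F \ T ⁻¹' F = T ⁻¹' (S ⁻¹' F \ F) := by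
          rw [Set.preimage_diff, hTpre]
        rw [heq, iet_preserving hL π (hSFm.diff hFm), h2]
      have hT2 : lam (T ⁻¹' F \ F) = 0 := by
        have heq : T ⁻¹' F \ F = T ⁻¹' (F \ S ⁻¹' F) := by
          rw [Set.preimage_diff, hTpre]
        rw [heq, iet_preserving hL π (hFm.diff hSFm), h1]
      rcases hull hTm (fun {A} hA => iet_preserving hL π hA) hTid hErg hFm
        Set.inter_subset_right hT1 hT2 with h0 | hone
      · exfalso
        rw [hlamEF] at hpos'
        exact absurd h0 (ne_of_gt hpos')
      · rw [hlamEF]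
        exact hone
    · -- radii bounded below
      push_neg at hinf
      obtain ⟨θ, hθpos, hθ⟩ := hinf
      have horb : ∀ i : ℕ, T^[i] x ∈ Set.Ico (0:ℝ) 1 := iterate_mem_Ico hL π hx
      have hsub : Set.Ico (0:ℝ) 1 ⊆ E := by
        intro y hy
        rw [hEdef, mem_limsupSet]
        intro n
        have hab2 : y < min (y + θ) 1 := lt_min (by linarith) hy.2
        obtain ⟨i, hi1, hiJ⟩ := orbit_enters hL π hErg (horb n) hy.1 hab2 (min_le_right _ _)
        refine ⟨i + n, by omega, ?_⟩
        rw [← Function.iterate_add_apply] at hiJ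
        rw [Metric.mem_ball, Real.dist_eq]
        have h1 : y ≤ T^[i + n] x := hiJ.1
        have h2 : T^[i + n] x < y + θ := lt_of_lt_of_le hiJ.2 (min_le_left _ _)
        have h3 : θ ≤ a (i + n) := hθ (i + n)
        rw [abs_of_nonpos (by linarith)]
        linarith
      refine le_antisymm ?_ ?_
      · rw [← lam_univ]
        exact measure_mono (Set.subset_univ _)
      · calc (1 : ENNReal) = lam (Set.Ico (0:ℝ) 1) := by
              rw [lam, Measure.restrict_apply measurableSet_Ico, Set.inter_self,
                Real.volume_Ico]
              norm_num
          _ ≤ lam E := measure_mono hsub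
  · -- part (ii)
    intro hpos2
    set T := iet L π with hTdef
    set G : Set (ℝ × ℝ) :=
      limsupSet (fun i => {p : ℝ × ℝ | dist p.2 (T^[i] p.1) < a i}) with hGdef
    have hGm : MeasurableSet G := by
      refine MeasurableSet.iInter fun n => MeasurableSet.iUnion fun i =>
        MeasurableSet.iUnion fun _ => ?_
      exact measurableSet_lt
        (Measurable.dist measurable_snd ((hTm.iterate i).comp measurable_fst))
        measurable_const
    have hsec : ∀ x : ℝ, Prod.mk x ⁻¹' G =
        limsupSet fun i => Metric.ball (T^[i] x) (a i) := by
      intro x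
      ext y
      rw [Set.mem_preimage, hGdef, mem_limsupSet, mem_limsupSet]
      exact Iff.rfl
    set f : ℝ → ENNReal := fun x => lam (Prod.mk x ⁻¹' G) with hfdef
    have hf : Measurable f := measurable_measure_prodMk_left hGm
    have hf1 : ∀ x, f x ≤ 1 := by
      intro x
      rw [hfdef]
      exact le_trans (measure_mono (Set.subset_univ _)) (le_of_eq lam_univ)
    have hfT : ∀ x, f x ≤ f (T x) := by
      intro x
      rw [hfdef]
      apply measure_mono
      rw [hsec, hsec]
      intro y hy
      rw [mem_limsupSet] at hy ⊢
      intro n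
      obtain ⟨i, hi, hyi⟩ := hy (n + 1)
      obtain ⟨m, rfl⟩ : ∃ m, i = m + 1 := ⟨i - 1, by omega⟩
      refine ⟨m, by omega, ?_⟩
      rw [← Function.iterate_succ_apply]
      exact Metric.ball_subset_ball (hmono m (m+1) (by omega)) hyi
    set B : Set ℝ := Set.Ico (0:ℝ) 1 ∩ {x | f x = 1} with hBdef
    have hfm1 : MeasurableSet {x : ℝ | f x = 1} := hf (measurableSet_singleton 1)
    have hBm : MeasurableSet B := measurableSet_Ico.inter hfm1
    have hBsub : B ⊆ Set.Ico (0:ℝ) 1 := Set.inter_subset_left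
    have hBT : B ⊆ T ⁻¹' B := by
      rintro x ⟨hxI, hxf⟩
      refine Set.mem_preimage.mpr ⟨iet_mem hL π hxI, ?_⟩
      have : (1 : ENNReal) ≤ f (T x) := by
        rw [← hxf]
        exact hfT x
      exact le_antisymm (hf1 _) this
    have h1 : lam (B \ T ⁻¹' B) = 0 := by
      rw [Set.diff_eq_empty.mpr hBT, measure_empty]
    have h2 : lam (T ⁻¹' B \ B) = 0 := by
      have e1 := measure_diff_add_inter (μ := lam) (T ⁻¹' B) hBm
      rw [Set.inter_eq_right.mpr hBT, iet_preserving hL π hBm] at e1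
      exact (ENNReal.add_left_inj (lam_ne_top B)).mp (by rw [zero_add]; exact e1)
    rcases hull hTm (fun {A} hA => iet_preserving hL π hA) hTid hErg hBm hBsub h1 h2
      with h0 | hone
    · exfalso
      -- hypothesis contradicts lam B = 0
      have hset : {x | lam (limsupSet fun i => Metric.ball ((iet L π)^[i] x) (a i)) = 1}
          = {x | f x = 1} := by
        ext x
        simp only [Set.mem_setOf_eq, hfdef, hsec, hTdef]
      rw [hset] at hpos2
      have : lam {x | f x = 1} ≤ lam B := by
        rw [lam, Measure.restrict_apply hfm1, Measure.restrict_apply hBm]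
        apply measure_mono
        intro y hy
        exact ⟨⟨hy.2, hy.1⟩, hy.2⟩
      rw [h0] at this
      exact absurd (le_antisymm this (zero_le)) (ne_of_gt hpos2)
    · -- conclusion
      have hset : {x | lam (limsupSet fun i => Metric.ball ((iet L π)^[i] x) (a i)) = 1}
          = {x | f x = 1} := by
        ext x
        simp only [Set.mem_setOf_eq, hfdef, hsec, hTdef]
      rw [ae_iff]
      have hset2 : {x | ¬ lam (limsupSet fun i => Metric.ball ((iet L π)^[i] x) (a i)) = 1}
          = {x | f x = 1}ᶜ := by
        rw [← hset]
        rfl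
      rw [hset2]
      rw [lam, Measure.restrict_apply hfm1.compl]
      have hsub : {x | f x = 1}ᶜ ∩ Set.Ico (0:ℝ) 1 = Set.Ico (0:ℝ) 1 \ B := by
        ext y
        simp only [Set.mem_inter_iff, Set.mem_compl_iff, Set.mem_setOf_eq, Set.mem_diff,
          hBdef]
        tauto
      rw [hsub]
      have e1 := measure_diff_add_inter (μ := lam) (Set.Ico (0:ℝ) 1) hBm
      rw [Set.inter_eq_right.mpr hBsub] at e1
      rw [hone] at e1
      have hIco : lam (Set.Ico (0:ℝ) 1) = 1 := by
        rw [lam, Measure.restrict_apply measurableSet_Ico, Set.inter_self, Real.volume_Ico]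
        norm_num
      rw [hIco] at e1
      have : lam (Set.Ico (0:ℝ) 1 \ B) = 0 :=
        (ENNReal.add_left_inj ENNReal.one_ne_top).mp (by rw [zero_add]; exact e1)
      have e3 : (Set.Ico (0:ℝ) 1 \ B) ∩ Set.Ico (0:ℝ) 1 = Set.Ico (0:ℝ) 1 \ B :=
        Set.inter_eq_left.mpr Set.diff_subset
      rw [lam, Measure.restrict_apply (measurableSet_Ico.diff hBm), e3] at this
      exact this
end
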